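/- arXiv:1502.06168 — 4 statements merged into one kernel-verified Lean document; each statement's English description precedes it below -/
import Mathlib

section
/- Let H be an interval supergraph of a finite graph G (i.e., V(H)=V(G) and E(G) ⊆ E(H)). Define φ(G,H) as the maximum over all W ⊆ V such that H[W] is a clique of the ratio β(G[W])/α(G[W]). Then β(G) ≤ 2·α(G)·φ(G,H)·(log₂(α(H)) + 1). -/
set_option linter.unusedSectionVars false
set_option linter.unusedVariables false


open SimpleGraph

/-- `s` is an independent set in `G`: pairwise nonadjacent vertices. -/
def SimpleGraph.IsIndepFinset {V : Type*} (G : SimpleGraph V) (s : Finset V) : Prop :=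
  (s : Set V).Pairwise fun a b => ¬ G.Adj a b

/-- The independence number `α(G)`: the largest size of an independent set. -/
noncomputable def indepNum {V : Type*} (G : SimpleGraph V) : ℕ :=
  sSup {n | ∃ s : Finset V, G.IsIndepFinset s ∧ s.card = n}

/-- `C` is a clique cover of `G`: a family of cliques covering every vertex. -/
def SimpleGraph.IsCliqueCover {V : Type*} (G : SimpleGraph V) (C : Finset (Finset V)) : Prop :=
  (∀ c ∈ C, G.IsClique (c : Set V)) ∧ ∀ v : V, ∃ c ∈ C, v ∈ c

/-- The clique cover number `β(G)`: minimum number of cliques covering `V(G)`. -/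
noncomputable def cliqueCoverNum {V : Type*} (G : SimpleGraph V) : ℕ :=
  sInf {n | ∃ C : Finset (Finset V), G.IsCliqueCover C ∧ C.card = n}

/-- `G` is an interval graph: the intersection graph of closed real intervals. -/
def IsIntervalGraph {V : Type*} (G : SimpleGraph V) : Prop :=
  ∃ a b : V → ℝ, ∀ u v : V, G.Adj u v ↔
    u ≠ v ∧ (Set.Icc (a u) (b u) ∩ Set.Icc (a v) (b v)).Nonempty

/-- `G` is perfect (stated via clique covers): `β = α` on every induced subgraph. -/
def IsPerfectGraph {V : Type*} (G : SimpleGraph V) : Prop :=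
  ∀ W : Finset V, cliqueCoverNum (G.induce (W : Set V)) = _root_.indepNum (G.induce (W : Set V))

/-- `φ(G,H)`: the maximum of `β(G[W])/α(G[W])` over subsets `W` inducing cliques in `H`. -/
noncomputable def phi {V : Type*} (G H : SimpleGraph V) : ℝ :=
  sSup {x : ℝ | ∃ W : Finset V, H.IsClique (W : Set V) ∧
    x = (cliqueCoverNum (G.induce (W : Set V)) : ℝ) / (_root_.indepNum (G.induce (W : Set V)) : ℝ)}

def fdepth : ℕ → ℕ
  | 0 => 0
  | 1 => 1
  | n+2 => 1 + fdepth ((n+3)/2)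
  termination_by n => n
  decreasing_by omega

lemma fdepth_eq {k : ℕ} (h : 2 ≤ k) : fdepth k = 1 + fdepth ((k+1)/2) := by
  obtain ⟨n, rfl⟩ : ∃ n, k = n + 2 := ⟨k - 2, by omega⟩
  rw [fdepth]

lemma one_le_fdepth {k : ℕ} (h : 1 ≤ k) : 1 ≤ fdepth k := by
  rcases eq_or_lt_of_le h with h1 | h2
  · rw [← h1]
    simp [fdepth]
  · rw [fdepth_eq h2]
    omega

lemma fdepth_pow {k : ℕ} (h : 2 ≤ k) : 2 ^ (fdepth k - 2) ≤ k - 1 := by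
  induction k using Nat.strong_induction_on with
  | _ k IH =>
  have hm1 : 1 ≤ (k+1)/2 := by omega
  have hmlt : (k+1)/2 < k := by omega
  rw [fdepth_eq h]
  rcases eq_or_lt_of_le hm1 with h1 | h2
  · rw [← h1]
    simp [fdepth]
    omega
  · have hf2 : 2 ≤ fdepth ((k+1)/2) := by
      rw [fdepth_eq h2]
      have := one_le_fdepth (k := ((k+1)/2+1)/2) (by omega)
      omega
    have hIH := IH ((k+1)/2) hmlt h2
    have heq : 1 + fdepth ((k+1)/2) - 2 = (fdepth ((k+1)/2) - 2) + 1 := by omega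
    rw [heq, pow_succ]
    set t := 2 ^ (fdepth ((k+1)/2) - 2)
    omega

lemma fdepth_le_logb {k : ℕ} (h : 1 ≤ k) : (fdepth k : ℝ) ≤ 2 * (Real.logb 2 (k : ℝ) + 1) := by
  have hlog0 : 0 ≤ Real.logb 2 (k : ℝ) :=
    Real.logb_nonneg (by norm_num) (by exact_mod_cast h)
  rcases eq_or_lt_of_le h with h1 | h2
  · rw [← h1]
    norm_num [fdepth]
  · have hf2 : 2 ≤ fdepth k := by
      rw [fdepth_eq h2]
      have := one_le_fdepth (k := (k+1)/2) (by omega)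
      omega
    have hp := fdepth_pow h2
    have hcast : ((2:ℝ)) ^ (fdepth k - 2) ≤ (k : ℝ) := by
      calc ((2:ℝ)) ^ (fdepth k - 2) = ((2 ^ (fdepth k - 2) : ℕ) : ℝ) := by push_cast; ring
        _ ≤ ((k - 1 : ℕ) : ℝ) := by exact_mod_cast hp
        _ ≤ (k : ℝ) := by
            have : (k - 1 : ℕ) ≤ k := Nat.sub_le _ _
            exact_mod_cast this
    have hlb : ((fdepth k - 2 : ℕ) : ℝ) ≤ Real.logb 2 (k : ℝ) := by
      have h2k : (0:ℝ) < (2:ℝ) ^ (fdepth k - 2) := by positivity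
      calc ((fdepth k - 2 : ℕ) : ℝ) = Real.logb 2 ((2:ℝ) ^ (fdepth k - 2)) := by
            rw [Real.logb_pow]
            simp [Real.logb_self_eq_one]
        _ ≤ Real.logb 2 (k : ℝ) := Real.logb_le_logb_of_le (by norm_num) h2k hcast
    have hc2 : ((fdepth k - 2 : ℕ) : ℝ) = (fdepth k : ℝ) - 2 := by
      push_cast [Nat.cast_sub hf2]
      ring
    rw [hc2] at hlb
    linarith

lemma exists_threshold : ∀ (m : ℕ) (J : Finset ℝ), 1 ≤ m → m ≤ J.card →
    ∃ q ∈ J, (J.filter (fun x => x ≤ q)).card = m := by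
  intro m
  induction m with
  | zero => omega
  | succ m IH =>
    intro J h1 h2
    have hne : J.Nonempty := Finset.card_pos.mp (by omega)
    rcases Nat.eq_zero_or_pos m with rfl | hm
    · refine ⟨J.min' hne, J.min'_mem hne, ?_⟩
      have : J.filter (fun x => x ≤ J.min' hne) = {J.min' hne} := by
        ext x
        simp only [Finset.mem_filter, Finset.mem_singleton]
        constructor
        · rintro ⟨hx, hle⟩
          exact le_antisymm hle (J.min'_le x hx)
        · rintro rfl
          exact ⟨J.min'_mem hne, le_refl _⟩
      rw [this, Finset.card_singleton]
    · set J' := J.erase (J.min' hne) with hJ'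
      have hcard' : J'.card = J.card - 1 := Finset.card_erase_of_mem (J.min'_mem hne)
      obtain ⟨q, hqJ', hq⟩ := IH J' hm (by omega)
      have hqJ : q ∈ J := Finset.mem_of_mem_erase hqJ'
      refine ⟨q, hqJ, ?_⟩
      have hminq : J.min' hne ≤ q := J.min'_le q hqJ
      have hsplit : J.filter (fun x => x ≤ q) = insert (J.min' hne) (J'.filter (fun x => x ≤ q)) := by
        ext x
        simp only [Finset.mem_filter, Finset.mem_insert, hJ', Finset.mem_erase]
        constructor
        · rintro ⟨hx, hle⟩
          by_cases hxm : x = J.min' hne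
          · exact Or.inl hxm
          · exact Or.inr ⟨⟨hxm, hx⟩, hle⟩
        · rintro (rfl | ⟨⟨-, hx⟩, hle⟩)
          · exact ⟨J.min'_mem hne, hminq⟩
          · exact ⟨hx, hle⟩
      rw [hsplit, Finset.card_insert_of_notMem, hq]
      simp only [Finset.mem_filter, hJ', Finset.mem_erase]
      rintro ⟨⟨hne2, -⟩, -⟩
      exact hne2 rfl

section Aux
variable {V : Type*} [Fintype V] (G H : SimpleGraph V)

/-- relative independence number -/
noncomputable def arel (S : Finset V) : ℕ :=
  sSup {n | ∃ s : Finset V, G.IsIndepFinset s ∧ s ⊆ S ∧ s.card = n}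

/-- relative clique cover number -/
noncomputable def brel (S : Finset V) : ℕ :=
  sInf {n | ∃ C : Finset (Finset V), (∀ c ∈ C, G.IsClique (c : Set V)) ∧
    (∀ v ∈ S, ∃ c ∈ C, v ∈ c) ∧ C.card = n}

variable {G H}

lemma arelSet_nonempty (S : Finset V) :
    {n | ∃ s : Finset V, G.IsIndepFinset s ∧ s ⊆ S ∧ s.card = n}.Nonempty :=
  ⟨0, ∅, by simp [SimpleGraph.IsIndepFinset], by simp, rfl⟩

lemma arelSet_bdd (S : Finset V) :
    BddAbove {n | ∃ s : Finset V, G.IsIndepFinset s ∧ s ⊆ S ∧ s.card = n} :=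
  ⟨Fintype.card V, fun n hn => by obtain ⟨s, -, -, rfl⟩ := hn; exact s.card_le_univ⟩

lemma le_arel {s S : Finset V} (h1 : G.IsIndepFinset s) (h2 : s ⊆ S) : s.card ≤ arel G S :=
  le_csSup (arelSet_bdd S) ⟨s, h1, h2, rfl⟩

lemma arel_le {S : Finset V} {m : ℕ} (h : ∀ s : Finset V, G.IsIndepFinset s → s ⊆ S → s.card ≤ m) :
    arel G S ≤ m :=
  csSup_le (arelSet_nonempty S) (fun n hn => by obtain ⟨s, h1, h2, rfl⟩ := hn; exact h s h1 h2)

lemma exists_arel (S : Finset V) :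
    ∃ s : Finset V, G.IsIndepFinset s ∧ s ⊆ S ∧ s.card = arel G S :=
  Nat.sSup_mem (arelSet_nonempty S) (arelSet_bdd S)

lemma arel_mono {S T : Finset V} (h : S ⊆ T) : arel G S ≤ arel G T :=
  arel_le fun s h1 h2 => le_arel h1 (h2.trans h)

lemma brelSet_nonempty (S : Finset V) :
    {n | ∃ C : Finset (Finset V), (∀ c ∈ C, G.IsClique (c : Set V)) ∧
      (∀ v ∈ S, ∃ c ∈ C, v ∈ c) ∧ C.card = n}.Nonempty := by
  classical
  refine ⟨_, S.image (fun v => {v}), ?_, ?_, rfl⟩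
  · intro c hc
    obtain ⟨v, -, rfl⟩ := Finset.mem_image.mp hc
    simp [SimpleGraph.isClique_iff, Set.Pairwise]
  · intro v hv
    exact ⟨{v}, Finset.mem_image_of_mem _ hv, Finset.mem_singleton_self v⟩

lemma brel_le {S : Finset V} {C : Finset (Finset V)} (h1 : ∀ c ∈ C, G.IsClique (c : Set V))
    (h2 : ∀ v ∈ S, ∃ c ∈ C, v ∈ c) : brel G S ≤ C.card :=
  Nat.sInf_le ⟨C, h1, h2, rfl⟩

lemma exists_brel (S : Finset V) :
    ∃ C : Finset (Finset V), (∀ c ∈ C, G.IsClique (c : Set V)) ∧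
      (∀ v ∈ S, ∃ c ∈ C, v ∈ c) ∧ C.card = brel G S :=
  Nat.sInf_mem (brelSet_nonempty S)

lemma brel_le_card (S : Finset V) : brel G S ≤ S.card := by
  classical
  calc brel G S ≤ (S.image (fun v => ({v} : Finset V))).card := by
        refine brel_le ?_ ?_
        · intro c hc
          obtain ⟨v, -, rfl⟩ := Finset.mem_image.mp hc
          simp [SimpleGraph.isClique_iff, Set.Pairwise]
        · intro v hv
          exact ⟨{v}, Finset.mem_image_of_mem _ hv, Finset.mem_singleton_self v⟩
    _ ≤ S.card := Finset.card_image_le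

lemma brel_mono {S T : Finset V} (h : S ⊆ T) : brel G S ≤ brel G T := by
  obtain ⟨C, h1, h2, hc⟩ := exists_brel (G := G) T
  exact hc ▸ brel_le h1 (fun v hv => h2 v (h hv))

lemma brel_union_le [DecidableEq V] (A B : Finset V) : brel G (A ∪ B) ≤ brel G A + brel G B := by
  classical
  obtain ⟨C, h1, h2, hc⟩ := exists_brel (G := G) A
  obtain ⟨D, g1, g2, gc⟩ := exists_brel (G := G) B
  calc brel G (A ∪ B) ≤ (C ∪ D).card := by
        refine brel_le ?_ ?_
        · intro c hc
          rcases Finset.mem_union.mp hc with h | h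
          exacts [h1 c h, g1 c h]
        · intro v hv
          rcases Finset.mem_union.mp hv with h | h
          · obtain ⟨c, hcC, hvc⟩ := h2 v h
            exact ⟨c, Finset.mem_union_left _ hcC, hvc⟩
          · obtain ⟨c, hcD, hvc⟩ := g2 v h
            exact ⟨c, Finset.mem_union_right _ hcD, hvc⟩
    _ ≤ C.card + D.card := Finset.card_union_le _ _
    _ = brel G A + brel G B := by rw [hc, gc]

lemma brel_empty : brel G (∅ : Finset V) = 0 :=
  Nat.le_zero.mp ((brel_le_card ∅).trans (by simp))


lemma indep_map {W : Finset V} (s : Finset ↥(W : Set V))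
    (hs : (G.induce (W : Set V)).IsIndepFinset s) :
    G.IsIndepFinset (s.map (Function.Embedding.subtype _)) := by
  intro x hx y hy hxy
  simp only [Finset.coe_map, Set.mem_image, Finset.mem_coe] at hx hy
  obtain ⟨x', hx', rfl⟩ := hx
  obtain ⟨y', hy', rfl⟩ := hy
  have hne : x' ≠ y' := fun h => hxy (by rw [h])
  have := hs hx' hy' hne
  intro hadj
  exact this (by simpa using hadj)

lemma brel_le_cliqueCoverNum_induce (W : Finset V) :
    brel G W ≤ cliqueCoverNum (G.induce (W : Set V)) := by
  classical
  haveI : Fintype ↥(W : Set V) := (Set.toFinite _).fintype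
  have hne : {n | ∃ C : Finset (Finset ↥(W : Set V)),
      (G.induce (W : Set V)).IsCliqueCover C ∧ C.card = n}.Nonempty := by
    refine ⟨_, (Finset.univ : Finset ↥(W : Set V)).image (fun v => {v}), ⟨?_, ?_⟩, rfl⟩
    · intro c hc
      obtain ⟨v, -, rfl⟩ := Finset.mem_image.mp hc
      simp [SimpleGraph.isClique_iff, Set.Pairwise]
    · intro v
      exact ⟨{v}, Finset.mem_image_of_mem _ (Finset.mem_univ v), Finset.mem_singleton_self v⟩
  obtain ⟨D, ⟨hD1, hD2⟩, hDc⟩ := Nat.sInf_mem hne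
  calc brel G W ≤ (D.image (fun c => c.map (Function.Embedding.subtype _))).card := by
        refine brel_le ?_ ?_
        · intro c hc
          obtain ⟨c', hc', rfl⟩ := Finset.mem_image.mp hc
          have hcl := hD1 c' hc'
          intro x hx y hy hxy
          simp only [Finset.coe_map, Set.mem_image, Finset.mem_coe] at hx hy
          obtain ⟨x', hx', rfl⟩ := hx
          obtain ⟨y', hy', rfl⟩ := hy
          have hne2 : x' ≠ y' := fun h => hxy (by rw [h])
          simpa using hcl hx' hy' hne2
        · intro v hv
          obtain ⟨c, hcD, hvc⟩ := hD2 ⟨v, by simpa using hv⟩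
          exact ⟨c.map (Function.Embedding.subtype _), Finset.mem_image_of_mem _ hcD,
            by simp only [Finset.mem_map]; exact ⟨⟨v, by simpa using hv⟩, hvc, rfl⟩⟩
    _ ≤ D.card := Finset.card_image_le
    _ = cliqueCoverNum (G.induce (W : Set V)) := hDc

lemma indepNum_induce_le_arel (W : Finset V) :
    _root_.indepNum (G.induce (W : Set V)) ≤ arel G W := by
  refine csSup_le ⟨0, ∅, by simp [SimpleGraph.IsIndepFinset], rfl⟩ ?_
  rintro n ⟨s, hs, rfl⟩
  have h1 := indep_map s hs
  have h2 : (s.map (Function.Embedding.subtype _)) ⊆ W := by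
    intro x hx
    simp only [Finset.mem_map, Function.Embedding.coe_subtype] at hx
    obtain ⟨x', -, rfl⟩ := hx
    exact Finset.mem_coe.mp x'.2
  simpa using le_arel h1 h2

lemma arel_superadd [DecidableEq V] {A B : Finset V} (hd : Disjoint A B)
    (hsep : ∀ a ∈ A, ∀ b ∈ B, ¬G.Adj a b) :
    arel G A + arel G B ≤ arel G (A ∪ B) := by
  obtain ⟨sA, hA1, hA2, hAc⟩ := exists_arel (G := G) A
  obtain ⟨sB, hB1, hB2, hBc⟩ := exists_arel (G := G) B
  have hdisj : Disjoint sA sB := hd.mono hA2 hB2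
  have hindep : G.IsIndepFinset (sA ∪ sB) := by
    intro x hx y hy hxy
    simp only [Finset.coe_union, Set.mem_union, Finset.mem_coe] at hx hy
    rcases hx with hx | hx <;> rcases hy with hy | hy
    · exact hA1 hx hy hxy
    · exact hsep x (hA2 hx) y (hB2 hy)
    · exact fun h => hsep y (hA2 hy) x (hB2 hx) h.symm
    · exact hB1 hx hy hxy
  have hsub : sA ∪ sB ⊆ A ∪ B := Finset.union_subset_union hA2 hB2
  have := le_arel hindep hsub
  rwa [Finset.card_union_of_disjoint hdisj, hAc, hBc] at this


lemma indepNumSet_bdd {α : Type*} [Fintype α] (G' : SimpleGraph α) :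
    BddAbove {n | ∃ s : Finset α, G'.IsIndepFinset s ∧ s.card = n} :=
  ⟨Fintype.card α, fun n hn => by obtain ⟨s, -, rfl⟩ := hn; exact s.card_le_univ⟩

lemma phiSet_bddAbove :
    BddAbove {x : ℝ | ∃ W : Finset V, H.IsClique (W : Set V) ∧
      x = (cliqueCoverNum (G.induce (W : Set V)) : ℝ) / (_root_.indepNum (G.induce (W : Set V)) : ℝ)} := by
  refine BddAbove.mono ?_ (Set.finite_range (fun W : Finset V =>
    (cliqueCoverNum (G.induce (W : Set V)) : ℝ) / (_root_.indepNum (G.induce (W : Set V)) : ℝ))).bddAbove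
  rintro x ⟨W, -, rfl⟩
  exact ⟨W, rfl⟩

lemma cliqueCoverNum_empty_coe :
    cliqueCoverNum (G.induce (((∅ : Finset V) : Set V))) = 0 := by
  have h0 : (0 : ℕ) ∈ {n | ∃ C : Finset (Finset ↥(((∅ : Finset V) : Set V))),
      (G.induce (((∅ : Finset V) : Set V))).IsCliqueCover C ∧ C.card = n} := by
    refine ⟨∅, ⟨by simp, fun v => absurd v.2 (by simp)⟩, rfl⟩
  exact Nat.eq_zero_of_le_zero (Nat.sInf_le h0)

lemma phi_nonneg : 0 ≤ phi G H := by
  refine le_csSup phiSet_bddAbove ⟨∅, by simp, ?_⟩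
  rw [cliqueCoverNum_empty_coe]
  simp

lemma phi_ge_one (v : V) : (1 : ℝ) ≤ phi G H := by
  classical
  haveI : Fintype ↥((({v} : Finset V) : Set V)) := (Set.toFinite _).fintype
  have hsub : Subsingleton ↥((({v} : Finset V) : Set V)) := by
    constructor
    intro a b
    have ha : (a : V) ∈ (({v} : Finset V) : Set V) := a.2
    have hb : (b : V) ∈ (({v} : Finset V) : Set V) := b.2
    simp only [Finset.coe_singleton, Set.mem_singleton_iff] at ha hb
    exact Subtype.ext (ha.trans hb.symm)
  have hvmem : v ∈ (({v} : Finset V) : Set V) := by simp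
  -- clique cover number of the induced singleton is 1
  have hβle : cliqueCoverNum (G.induce ((({v} : Finset V) : Set V))) ≤ 1 := by
    refine Nat.sInf_le ⟨{(Finset.univ : Finset ↥((({v} : Finset V) : Set V)))}, ⟨?_, ?_⟩, rfl⟩
    · intro c hc
      rw [Finset.mem_singleton] at hc
      subst hc
      intro x hx y hy hxy
      exact absurd (Subsingleton.elim x y) hxy
    · intro u
      exact ⟨Finset.univ, Finset.mem_singleton_self _, Finset.mem_univ u⟩
  have hβne : cliqueCoverNum (G.induce ((({v} : Finset V) : Set V))) ≠ 0 := by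
    intro h
    rcases (Nat.sInf_eq_zero.mp h) with h0 | hemp
    · obtain ⟨C, ⟨-, hcov⟩, hcard⟩ := h0
      obtain ⟨c, hcC, -⟩ := hcov ⟨v, hvmem⟩
      rw [Finset.card_eq_zero.mp hcard] at hcC
      exact absurd hcC (Finset.notMem_empty c)
    · have : (1 : ℕ) ∈ {n | ∃ C : Finset (Finset ↥((({v} : Finset V) : Set V))),
          (G.induce ((({v} : Finset V) : Set V))).IsCliqueCover C ∧ C.card = n} := by
        refine ⟨{(Finset.univ : Finset ↥((({v} : Finset V) : Set V)))}, ⟨?_, ?_⟩, rfl⟩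
        · intro c hc
          rw [Finset.mem_singleton] at hc
          subst hc
          intro x hx y hy hxy
          exact absurd (Subsingleton.elim x y) hxy
        · intro u
          exact ⟨Finset.univ, Finset.mem_singleton_self _, Finset.mem_univ u⟩
      rw [hemp] at this
      exact absurd this (Set.notMem_empty 1)
  have hβ : cliqueCoverNum (G.induce ((({v} : Finset V) : Set V))) = 1 :=
    le_antisymm hβle (Nat.one_le_iff_ne_zero.mpr hβne)
  have hαge : 1 ≤ _root_.indepNum (G.induce ((({v} : Finset V) : Set V))) := by
    refine le_csSup (indepNumSet_bdd _) ⟨{⟨v, hvmem⟩}, ?_, Finset.card_singleton _⟩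
    intro x hx y hy hxy
    simp only [Finset.coe_singleton, Set.mem_singleton_iff] at hx hy
    exact absurd (hx.trans hy.symm) hxy
  have hαle : _root_.indepNum (G.induce ((({v} : Finset V) : Set V))) ≤ 1 := by
    refine csSup_le ⟨0, ∅, by simp [SimpleGraph.IsIndepFinset], rfl⟩ ?_
    rintro n ⟨s, -, rfl⟩
    calc s.card ≤ Fintype.card ↥((({v} : Finset V) : Set V)) := s.card_le_univ
      _ ≤ 1 := Fintype.card_le_one_iff_subsingleton.mpr hsub
  have hα : _root_.indepNum (G.induce ((({v} : Finset V) : Set V))) = 1 := le_antisymm hαle hαge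
  refine le_csSup phiSet_bddAbove ⟨{v}, ?_, ?_⟩
  · intro x hx y hy hxy
    simp only [Finset.coe_singleton, Set.mem_singleton_iff] at hx hy
    exact absurd (hx.trans hy.symm) hxy
  · rw [hβ, hα]
    norm_num

lemma phi_clique_bound {W : Finset V} (hW : H.IsClique (W : Set V)) :
    (brel G W : ℝ) ≤ phi G H * (arel G W : ℝ) := by
  rcases W.eq_empty_or_nonempty with rfl | ⟨v, hv⟩
  · rw [brel_empty]
    push_cast
    exact mul_nonneg phi_nonneg (by positivity)
  · classical
    haveI : Fintype ↥((W : Set V)) := (Set.toFinite _).fintype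
    have hvmem : v ∈ (W : Set V) := by simpa using hv
    have hα : 1 ≤ _root_.indepNum (G.induce ((W : Set V))) := by
      refine le_csSup (indepNumSet_bdd _) ⟨{⟨v, hvmem⟩}, ?_, Finset.card_singleton _⟩
      intro x hx y hy hxy
      simp only [Finset.coe_singleton, Set.mem_singleton_iff] at hx hy
      exact absurd (hx.trans hy.symm) hxy
    have hφ : (cliqueCoverNum (G.induce (W : Set V)) : ℝ) / (_root_.indepNum (G.induce (W : Set V)) : ℝ)
        ≤ phi G H := le_csSup phiSet_bddAbove ⟨W, hW, rfl⟩
    have hβ : (brel G W : ℝ) ≤ (cliqueCoverNum (G.induce (W : Set V)) : ℝ) := by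
      exact_mod_cast brel_le_cliqueCoverNum_induce W
    have hαa : (_root_.indepNum (G.induce (W : Set V)) : ℝ) ≤ (arel G W : ℝ) := by
      exact_mod_cast indepNum_induce_le_arel W
    have hα0 : (0 : ℝ) < (_root_.indepNum (G.induce (W : Set V)) : ℝ) := by
      exact_mod_cast Nat.lt_of_lt_of_le Nat.zero_lt_one hα
    calc (brel G W : ℝ) ≤ (cliqueCoverNum (G.induce (W : Set V)) : ℝ) := hβ
      _ = ((cliqueCoverNum (G.induce (W : Set V)) : ℝ) / (_root_.indepNum (G.induce (W : Set V)) : ℝ))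
          * (_root_.indepNum (G.induce (W : Set V)) : ℝ) := by field_simp
      _ ≤ phi G H * (arel G W : ℝ) := mul_le_mul hφ hαa (le_of_lt hα0)
          ((div_nonneg (by positivity) (by positivity)).trans hφ)

set_option maxHeartbeats 1000000 in
lemma key_lemma (hle : G ≤ H) (a b : V → ℝ)
    (hab : ∀ u v : V, H.Adj u v ↔ u ≠ v ∧
      (Set.Icc (a u) (b u) ∩ Set.Icc (a v) (b v)).Nonempty) :
    ∀ (k : ℕ) (S : Finset V), arel H S ≤ k →
      (brel G S : ℝ) ≤ phi G H * (arel G S : ℝ) * (fdepth k : ℝ) := by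
  classical
  intro k
  induction k using Nat.strong_induction_on with
  | _ k IH =>
  intro S hSk
  rcases S.eq_empty_or_nonempty with rfl | ⟨v₀, hv₀⟩
  · rw [brel_empty]
    simp only [Nat.cast_zero]
    exact mul_nonneg (mul_nonneg phi_nonneg (by positivity)) (by positivity)
  have hφ1 : (1:ℝ) ≤ phi G H := phi_ge_one v₀
  have hφ0 : (0:ℝ) ≤ phi G H := zero_le_one.trans hφ1
  have hk1 : 1 ≤ k := by
    have h1 : 1 ≤ arel H S := by
      have : ({v₀} : Finset V).card ≤ arel H S := le_arel (by simp [SimpleGraph.IsIndepFinset])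
        (Finset.singleton_subset_iff.mpr hv₀)
      simpa using this
    omega
  have hfk1 : (1:ℝ) ≤ (fdepth k : ℝ) := by exact_mod_cast one_le_fdepth hk1
  -- split off vertices with empty intervals (isolated in H)
  set S' := S.filter (fun v => a v ≤ b v) with hS'def
  set S₀ := S.filter (fun v => ¬ a v ≤ b v) with hS₀def
  have hunion : S' ∪ S₀ = S := Finset.filter_union_filter_not_eq _ S
  have hd0 : Disjoint S' S₀ := Finset.disjoint_filter_filter_not S S _
  have hS'sub : S' ⊆ S := Finset.filter_subset _ _
  have hS₀sub : S₀ ⊆ S := Finset.filter_subset _ _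
  have hiso : ∀ u ∈ S₀, ∀ w : V, ¬ H.Adj u w := by
    intro u hu w hadj
    obtain ⟨-, x, hx1, -⟩ := (hab u w).mp hadj
    have hemp : Set.Icc (a u) (b u) = ∅ :=
      Set.Icc_eq_empty (Finset.mem_filter.mp hu).2
    rw [hemp] at hx1
    exact hx1
  have hisoG : ∀ u ∈ S₀, ∀ w : V, ¬ G.Adj u w := fun u hu w h => hiso u hu w (hle h)
  have hindS₀ : G.IsIndepFinset S₀ := fun x hx y _ _ =>
    hisoG x (Finset.mem_coe.mp hx) y
  have hb0 : (brel G S₀ : ℝ) ≤ phi G H * (arel G S₀ : ℝ) := by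
    have h1 : (brel G S₀ : ℝ) ≤ (S₀.card : ℝ) := by exact_mod_cast brel_le_card S₀
    have h2 : (S₀.card : ℝ) ≤ (arel G S₀ : ℝ) := by
      exact_mod_cast le_arel hindS₀ (subset_refl S₀)
    nlinarith
  by_cases hcl : arel H S' ≤ 1
  · -- S' is a clique in H
    have hclq : H.IsClique (S' : Set V) := by
      intro x hx y hy hxy
      by_contra hnadj
      have hind : H.IsIndepFinset {x, y} := by
        intro u hu w hw huw
        simp only [Finset.coe_insert, Finset.coe_singleton, Set.mem_insert_iff,
          Set.mem_singleton_iff] at hu hw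
        rcases hu with rfl | rfl <;> rcases hw with rfl | rfl
        · exact absurd rfl huw
        · exact hnadj
        · exact fun h => hnadj h.symm
        · exact absurd rfl huw
      have hsub : ({x, y} : Finset V) ⊆ S' := by
        intro z hz
        rcases Finset.mem_insert.mp hz with rfl | hz
        · exact Finset.mem_coe.mp hx
        · rw [Finset.mem_singleton.mp hz]
          exact Finset.mem_coe.mp hy
      have := le_arel hind hsub
      rw [Finset.card_pair hxy] at this
      omega
    have hbS' : (brel G S' : ℝ) ≤ phi G H * (arel G S' : ℝ) := phi_clique_bound hclq
    have hsum : arel G S' + arel G S₀ ≤ arel G S := by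
      have h1 := arel_superadd (G := G) hd0
        (fun u _ w hw h => hisoG w hw u h.symm)
      rw [hunion] at h1
      exact h1
    have hbS : brel G S ≤ brel G S' + brel G S₀ := by
      calc brel G S = brel G (S' ∪ S₀) := by rw [hunion]
        _ ≤ brel G S' + brel G S₀ := brel_union_le _ _
    have hc1 : (brel G S : ℝ) ≤ (brel G S' : ℝ) + (brel G S₀ : ℝ) := by exact_mod_cast hbS
    have hc2 : (arel G S' : ℝ) + (arel G S₀ : ℝ) ≤ (arel G S : ℝ) := by exact_mod_cast hsum
    have hαS : (0:ℝ) ≤ (arel G S : ℝ) := by positivity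
    have e1 : phi G H * ((arel G S' : ℝ) + (arel G S₀ : ℝ)) ≤ phi G H * (arel G S : ℝ) :=
      mul_le_mul_of_nonneg_left hc2 hφ0
    have e2 : phi G H * (arel G S : ℝ) ≤ phi G H * (arel G S : ℝ) * (fdepth k : ℝ) :=
      le_mul_of_one_le_right (mul_nonneg hφ0 hαS) hfk1
    nlinarith [hc1, hbS', hb0, e1, e2]
  · -- main splitting case
    push_neg at hcl
    set k'' := arel H S' with hk''def
    have hk''2 : 2 ≤ k'' := hcl
    have hk''k : k'' ≤ k := (arel_mono hS'sub).trans hSk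
    have hk2 : 2 ≤ k := le_trans hk''2 hk''k
    obtain ⟨I, hI1, hI2, hI3⟩ := exists_arel (G := H) S'
    have hIS' : ∀ v ∈ I, a v ≤ b v := fun v hv => (Finset.mem_filter.mp (hI2 hv)).2
    have hdisj : ∀ u ∈ I, ∀ w ∈ I, u ≠ w →
        Set.Icc (a u) (b u) ∩ Set.Icc (a w) (b w) = ∅ := by
      intro u hu w hw huw
      have hnadj : ¬ H.Adj u w := hI1 (Finset.mem_coe.mpr hu) (Finset.mem_coe.mpr hw) huw
      rw [hab] at hnadj
      exact Set.not_nonempty_iff_eq_empty.mp (fun hn => hnadj ⟨huw, hn⟩)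
    have hbinj : Set.InjOn b I := by
      intro u hu w hw hbw
      by_contra hne
      have h1 := hdisj u (Finset.mem_coe.mp hu) w (Finset.mem_coe.mp hw) hne
      have h2 : b u ∈ Set.Icc (a u) (b u) ∩ Set.Icc (a w) (b w) :=
        ⟨⟨hIS' u (Finset.mem_coe.mp hu), le_refl _⟩,
         ⟨by rw [hbw]; exact hIS' w (Finset.mem_coe.mp hw), le_of_eq hbw⟩⟩
      rw [h1] at h2
      exact h2
    set J := I.image b with hJdef
    have hJcard : J.card = k'' := by rw [hJdef, Finset.card_image_of_injOn hbinj, hI3]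
    set m := k'' / 2 with hmdef
    have hm1 : 1 ≤ m := by omega
    have hmlt : m < k'' := by omega
    obtain ⟨q, hqJ, hqcard⟩ := exists_threshold m J hm1 (by omega)
    set Ilow := I.filter (fun v => b v ≤ q) with hIlowdef
    set Ihigh := I.filter (fun v => ¬ b v ≤ q) with hIhighdef
    have hlowimage : Ilow.image b = J.filter (fun x => x ≤ q) := by
      ext x
      constructor
      · intro hx
        obtain ⟨v, hv, rfl⟩ := Finset.mem_image.mp hx
        have h1 := Finset.mem_filter.mp hv
        exact Finset.mem_filter.mpr ⟨Finset.mem_image_of_mem b h1.1, h1.2⟩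
      · intro hx
        have h1 := Finset.mem_filter.mp hx
        obtain ⟨v, hv, rfl⟩ := Finset.mem_image.mp h1.1
        exact Finset.mem_image_of_mem b (Finset.mem_filter.mpr ⟨hv, h1.2⟩)
    have hlowcard : Ilow.card = m := by
      have hsubI : (Ilow : Set V) ⊆ (I : Set V) :=
        Finset.coe_subset.mpr (Finset.filter_subset _ _)
      have := Finset.card_image_of_injOn (hbinj.mono hsubI)
      rw [hlowimage, hqcard] at this
      omega
    have hcards : Ilow.card + Ihigh.card = I.card :=
      Finset.card_filter_add_card_filter_not _
    have hhighcard : Ihigh.card = k'' - m := by omega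
    have hIhne : Ihigh.Nonempty := Finset.card_pos.mp (by omega)
    obtain ⟨w', hw'I, hw'min⟩ := Finset.exists_min_image Ihigh b hIhne
    have hw'I' : w' ∈ I := Finset.filter_subset _ _ hw'I
    have hw'q : q < b w' := not_le.mp (Finset.mem_filter.mp hw'I).2
    obtain ⟨w, hwI, hwq⟩ := Finset.mem_image.mp hqJ
    have hww' : w ≠ w' := by
      intro h
      rw [h] at hwq
      rw [hwq] at hw'q
      exact lt_irrefl q hw'q
    have hqa : q < a w' := by
      by_contra hle'
      push_neg at hle'
      have h1 := hdisj w hwI w' hw'I' hww'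
      have h2 : q ∈ Set.Icc (a w) (b w) ∩ Set.Icc (a w') (b w') :=
        ⟨⟨hwq ▸ hIS' w hwI, le_of_eq hwq.symm⟩, ⟨hle', le_of_lt hw'q⟩⟩
      rw [h1] at h2
      exact h2
    set p := (q + a w') / 2 with hpdef
    have hqp : q < p := by rw [hpdef]; linarith
    have hpa : p < a w' := by rw [hpdef]; linarith
    -- the three parts
    set W := S'.filter (fun v => a v ≤ p ∧ p ≤ b v) with hWdef
    set L := S'.filter (fun v => b v < p) with hLdef
    set R := S'.filter (fun v => p < a v) with hRdef
    have hWsub : W ⊆ S' := Finset.filter_subset _ _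
    have hLsub : L ⊆ S' := Finset.filter_subset _ _
    have hRsub : R ⊆ S' := Finset.filter_subset _ _
    have hcover : S' ⊆ W ∪ L ∪ R := by
      intro v hv
      by_cases h1 : a v ≤ p
      · by_cases h2 : p ≤ b v
        · exact Finset.mem_union_left _ (Finset.mem_union_left _
            (Finset.mem_filter.mpr ⟨hv, h1, h2⟩))
        · exact Finset.mem_union_left _ (Finset.mem_union_right _
            (Finset.mem_filter.mpr ⟨hv, not_le.mp h2⟩))
      · exact Finset.mem_union_right _ (Finset.mem_filter.mpr ⟨hv, not_le.mp h1⟩)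
    have hWclique : H.IsClique (W : Set V) := by
      intro x hx y hy hxy
      have hx' := Finset.mem_filter.mp (Finset.mem_coe.mp hx)
      have hy' := Finset.mem_filter.mp (Finset.mem_coe.mp hy)
      rw [hab]
      exact ⟨hxy, p, ⟨hx'.2.1, hx'.2.2⟩, ⟨hy'.2.1, hy'.2.2⟩⟩
    have hsepLR : ∀ u ∈ L, ∀ v ∈ R, ¬ H.Adj u v := by
      intro u hu v hv hadj
      obtain ⟨-, x, hx1, hx2⟩ := (hab u v).mp hadj
      have h1 : b u < p := (Finset.mem_filter.mp hu).2
      have h2 : p < a v := (Finset.mem_filter.mp hv).2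
      have := hx1.2
      have := hx2.1
      linarith
    have hIhighR : Ihigh ⊆ R := by
      intro v hv
      have hvI : v ∈ I := Finset.filter_subset _ _ hv
      have hvq : q < b v := not_le.mp (Finset.mem_filter.mp hv).2
      have hva : p < a v := by
        rcases eq_or_ne v w' with rfl | hne
        · exact hpa
        · have hbne : b v ≠ b w' := fun h =>
            hne (hbinj (Finset.mem_coe.mpr hvI) (Finset.mem_coe.mpr hw'I') h)
          have hbv : b w' < b v := lt_of_le_of_ne (hw'min v hv) (Ne.symm hbne)
          have hav : b w' < a v := by
            by_contra hle2
            push_neg at hle2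
            have h1 := hdisj v hvI w' hw'I' hne
            have h2 : b w' ∈ Set.Icc (a v) (b v) ∩ Set.Icc (a w') (b w') :=
              ⟨⟨hle2, le_of_lt hbv⟩, ⟨hIS' w' hw'I', le_refl _⟩⟩
            rw [h1] at h2
            exact h2
          have := hIS' w' hw'I'
          linarith
      exact Finset.mem_filter.mpr ⟨hI2 hvI, hva⟩
    have hIlowL : Ilow ⊆ L := by
      intro v hv
      have hvI : v ∈ I := Finset.filter_subset _ _ hv
      have hvq : b v ≤ q := (Finset.mem_filter.mp hv).2
      exact Finset.mem_filter.mpr ⟨hI2 hvI, lt_of_le_of_lt hvq hqp⟩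
    have hdLR : Disjoint L R := by
      rw [Finset.disjoint_left]
      intro v hvL hvR
      have h1 : b v < p := (Finset.mem_filter.mp hvL).2
      have h2 : p < a v := (Finset.mem_filter.mp hvR).2
      have h3 : a v ≤ b v := (Finset.mem_filter.mp (hLsub hvL)).2
      linarith
    -- independence number bounds for the two sides
    have hαL : arel H L ≤ m := by
      refine arel_le ?_
      intro T hT1 hT2
      have hdisjT : Disjoint T Ihigh := (hdLR.mono hT2 hIhighR)
      have hind : H.IsIndepFinset (T ∪ Ihigh) := by
        intro x hx y hy hxy
        simp only [Finset.coe_union, Set.mem_union, Finset.mem_coe] at hx hy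
        rcases hx with hx | hx <;> rcases hy with hy | hy
        · exact hT1 (Finset.mem_coe.mpr hx) (Finset.mem_coe.mpr hy) hxy
        · exact hsepLR x (hT2 hx) y (hIhighR hy)
        · exact fun h => hsepLR y (hT2 hy) x (hIhighR hx) h.symm
        · exact hI1 (Finset.mem_coe.mpr (Finset.filter_subset _ _ hx))
            (Finset.mem_coe.mpr (Finset.filter_subset _ _ hy)) hxy
      have hsub : T ∪ Ihigh ⊆ S' :=
        Finset.union_subset (hT2.trans hLsub) (hIhighR.trans hRsub)
      have := le_arel hind hsub
      rw [Finset.card_union_of_disjoint hdisjT, hhighcard, ← hk''def] at this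
      omega
    have hαR : arel H R ≤ k'' - m := by
      refine arel_le ?_
      intro T hT1 hT2
      have hdisjT : Disjoint T Ilow := (hdLR.symm.mono hT2 hIlowL)
      have hind : H.IsIndepFinset (T ∪ Ilow) := by
        intro x hx y hy hxy
        simp only [Finset.coe_union, Set.mem_union, Finset.mem_coe] at hx hy
        rcases hx with hx | hx <;> rcases hy with hy | hy
        · exact hT1 (Finset.mem_coe.mpr hx) (Finset.mem_coe.mpr hy) hxy
        · exact fun h => hsepLR y (hIlowL hy) x (hT2 hx) h.symm
        · exact hsepLR x (hIlowL hx) y (hT2 hy)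
        · exact hI1 (Finset.mem_coe.mpr (Finset.filter_subset _ _ hx))
            (Finset.mem_coe.mpr (Finset.filter_subset _ _ hy)) hxy
      have hsub : T ∪ Ilow ⊆ S' :=
        Finset.union_subset (hT2.trans hRsub) (hIlowL.trans hLsub)
      have := le_arel hind hsub
      rw [Finset.card_union_of_disjoint hdisjT, hlowcard, ← hk''def] at this
      omega
    -- recursion
    set m' := (k + 1) / 2 with hm'def
    have hm'lt : m' < k := by omega
    have hm'1 : 1 ≤ m' := by omega
    have hLm' : arel H L ≤ m' := by omega
    have hRm' : arel H R ≤ m' := by omega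
    have hIHL := IH m' hm'lt L hLm'
    have hIHR := IH m' hm'lt R hRm'
    have hbW : (brel G W : ℝ) ≤ phi G H * (arel G W : ℝ) := phi_clique_bound hWclique
    -- splitting the cover
    have hsplit : brel G S ≤ brel G S₀ + brel G W + brel G L + brel G R := by
      have hsub : S ⊆ S₀ ∪ (W ∪ (L ∪ R)) := by
        intro v hv
        rw [← hunion] at hv
        rcases Finset.mem_union.mp hv with hv | hv
        · have := hcover hv
          rw [Finset.union_assoc] at this
          exact Finset.mem_union_right _ this
        · exact Finset.mem_union_left _ hv
      calc brel G S ≤ brel G (S₀ ∪ (W ∪ (L ∪ R))) := brel_mono hsub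
        _ ≤ brel G S₀ + brel G (W ∪ (L ∪ R)) := brel_union_le _ _
        _ ≤ brel G S₀ + (brel G W + brel G (L ∪ R)) :=
            Nat.add_le_add_left (brel_union_le _ _) _
        _ ≤ brel G S₀ + (brel G W + (brel G L + brel G R)) :=
            Nat.add_le_add_left (Nat.add_le_add_left (brel_union_le _ _) _) _
        _ = brel G S₀ + brel G W + brel G L + brel G R := by ring
    -- superadditivity of arel for G
    have hsuper : arel G S₀ + arel G L + arel G R ≤ arel G S := by
      have h1 : arel G S₀ + arel G L ≤ arel G (S₀ ∪ L) :=
        arel_superadd (hd0.symm.mono_right hLsub) (fun u hu w _ h => hisoG u hu w h)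
      have h2 : arel G (S₀ ∪ L) + arel G R ≤ arel G ((S₀ ∪ L) ∪ R) := by
        refine arel_superadd ?_ ?_
        · rw [Finset.disjoint_union_left]
          exact ⟨hd0.symm.mono_right hRsub, hdLR⟩
        · intro u hu w hw h
          rcases Finset.mem_union.mp hu with hu | hu
          · exact hisoG u hu w h
          · exact hsepLR u hu w hw (hle h)
      have h3 : arel G ((S₀ ∪ L) ∪ R) ≤ arel G S := by
        refine arel_mono ?_
        refine Finset.union_subset (Finset.union_subset hS₀sub (hLsub.trans hS'sub))
          (hRsub.trans hS'sub)
      omega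
    have hαW : arel G W ≤ arel G S := arel_mono (hWsub.trans hS'sub)
    have hf' : (1:ℝ) ≤ (fdepth m' : ℝ) := by exact_mod_cast one_le_fdepth hm'1
    have hfkeq : (fdepth k : ℝ) = 1 + (fdepth m' : ℝ) := by
      rw [hm'def]
      exact_mod_cast fdepth_eq hk2
    -- final arithmetic
    have c1 : (brel G S : ℝ) ≤ (brel G S₀ : ℝ) + (brel G W : ℝ)
        + (brel G L : ℝ) + (brel G R : ℝ) := by exact_mod_cast hsplit
    have c2 : (arel G S₀ : ℝ) + (arel G L : ℝ) + (arel G R : ℝ) ≤ (arel G S : ℝ) := by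
      exact_mod_cast hsuper
    have c3 : (arel G W : ℝ) ≤ (arel G S : ℝ) := by exact_mod_cast hαW
    have n0 : (0:ℝ) ≤ (arel G S₀ : ℝ) := by positivity
    have nL : (0:ℝ) ≤ (arel G L : ℝ) := by positivity
    have nR : (0:ℝ) ≤ (arel G R : ℝ) := by positivity
    have nS : (0:ℝ) ≤ (arel G S : ℝ) := by positivity
    have e1 : phi G H * (arel G S₀ : ℝ) ≤ phi G H * (arel G S₀ : ℝ) * (fdepth m' : ℝ) :=
      le_mul_of_one_le_right (mul_nonneg hφ0 n0) hf'
    have e3 : phi G H * (fdepth m' : ℝ) * ((arel G S₀ : ℝ) + (arel G L : ℝ) + (arel G R : ℝ))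
        ≤ phi G H * (fdepth m' : ℝ) * (arel G S : ℝ) :=
      mul_le_mul_of_nonneg_left c2 (mul_nonneg hφ0 (by linarith))
    have e4 : phi G H * (arel G W : ℝ) ≤ phi G H * (arel G S : ℝ) :=
      mul_le_mul_of_nonneg_left c3 hφ0
    rw [hfkeq]
    nlinarith [hIHL, hIHR, hbW, hb0, c1, e1, e3, e4]

end Aux


theorem clique_cover_bound_interval_supergraph {V : Type*} [Fintype V]
    (G H : SimpleGraph V) (hle : G ≤ H) (hH : IsIntervalGraph H) :
    (cliqueCoverNum G : ℝ) ≤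
      2 * (_root_.indepNum G : ℝ) * phi G H * (Real.logb 2 (_root_.indepNum H : ℝ) + 1) := by
  classical
  obtain ⟨a, b, hab⟩ := hH
  rcases isEmpty_or_nonempty V with hV | hV
  · have hβ : cliqueCoverNum G = 0 := by
      refine Nat.eq_zero_of_le_zero (Nat.sInf_le ?_)
      exact ⟨∅, ⟨fun c hc => absurd hc (Finset.notMem_empty c),
        fun v => (IsEmpty.false v).elim⟩, rfl⟩
    have hα : _root_.indepNum G = 0 := by
      refine Nat.eq_zero_of_le_zero
        (csSup_le ⟨0, ∅, by simp [SimpleGraph.IsIndepFinset], rfl⟩ ?_)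
      rintro n ⟨s, -, rfl⟩
      calc s.card ≤ Fintype.card V := s.card_le_univ
        _ = 0 := Fintype.card_eq_zero
    rw [hβ, hα]
    push_cast
    nlinarith [Real.logb 2 (_root_.indepNum H : ℝ)]
  · have hkey := key_lemma hle a b hab (arel H Finset.univ) Finset.univ le_rfl
    have hG : arel G Finset.univ = _root_.indepNum G := by
      rw [arel, _root_.indepNum]
      apply congrArg
      ext n
      constructor
      · rintro ⟨s, h1, -, rfl⟩
        exact ⟨s, h1, rfl⟩
      · rintro ⟨s, h1, rfl⟩
        exact ⟨s, h1, Finset.subset_univ s, rfl⟩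
    have hHuniv : arel H Finset.univ = _root_.indepNum H := by
      rw [arel, _root_.indepNum]
      apply congrArg
      ext n
      constructor
      · rintro ⟨s, h1, -, rfl⟩
        exact ⟨s, h1, rfl⟩
      · rintro ⟨s, h1, rfl⟩
        exact ⟨s, h1, Finset.subset_univ s, rfl⟩
    have hcc : cliqueCoverNum G ≤ brel G Finset.univ := by
      obtain ⟨C, h1, h2, h3⟩ := exists_brel (G := G) Finset.univ
      exact h3 ▸ Nat.sInf_le ⟨C, ⟨h1, fun v => h2 v (Finset.mem_univ v)⟩, rfl⟩
    have hk1 : 1 ≤ arel H Finset.univ := by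
      obtain ⟨v⟩ := hV
      have : ({v} : Finset V).card ≤ arel H Finset.univ :=
        le_arel (by simp [SimpleGraph.IsIndepFinset]) (Finset.subset_univ _)
      simpa using this
    have hflog : (fdepth (arel H Finset.univ) : ℝ) ≤
        2 * (Real.logb 2 ((arel H Finset.univ : ℕ) : ℝ) + 1) := fdepth_le_logb hk1
    have hφ0 : (0:ℝ) ≤ phi G H := phi_nonneg
    have h1 : (cliqueCoverNum G : ℝ) ≤
        phi G H * (_root_.indepNum G : ℝ) * (fdepth (arel H Finset.univ) : ℝ) := by
      calc (cliqueCoverNum G : ℝ) ≤ (brel G Finset.univ : ℝ) := by exact_mod_cast hcc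
        _ ≤ phi G H * (arel G Finset.univ : ℝ) * (fdepth (arel H Finset.univ) : ℝ) := hkey
        _ = phi G H * (_root_.indepNum G : ℝ) * (fdepth (arel H Finset.univ) : ℝ) := by rw [hG]
    have h2 : phi G H * (_root_.indepNum G : ℝ) * (fdepth (arel H Finset.univ) : ℝ) ≤
        phi G H * (_root_.indepNum G : ℝ) * (2 * (Real.logb 2 ((_root_.indepNum H : ℕ) : ℝ) + 1)) := by
      rw [← hHuniv]
      exact mul_le_mul_of_nonneg_left hflog (mul_nonneg hφ0 (by positivity))
    calc (cliqueCoverNum G : ℝ) ≤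
        phi G H * (_root_.indepNum G : ℝ) * (2 * (Real.logb 2 ((_root_.indepNum H : ℕ) : ℝ) + 1)) :=
          le_trans h1 h2
      _ = 2 * (_root_.indepNum G : ℝ) * phi G H * (Real.logb 2 (_root_.indepNum H : ℝ) + 1) := by ring
end

section
/- Let G be a graph with E(G) = E(H₁) ∩ E(H₂), where H₁ is an interval supergraph of G and H₂ is a perfect supergraph of G (all on the same vertex set). Then for every W ⊆ V(G) such that H₁[W] is a clique, β(G[W]) = α(G[W]); equivalently, φ(G,H₁) = 1. -/
open SimpleGraph

lemma indepNum_ge_one {V : Type*} [Fintype V] [Nonempty V] (G : SimpleGraph V) :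
    1 ≤ _root_.indepNum G := by
  obtain ⟨v⟩ := (inferInstance : Nonempty V)
  apply le_csSup
  · exact ⟨Fintype.card V, fun n ⟨s, _, hc⟩ => hc ▸ s.card_le_univ⟩
  · exact ⟨{v}, by simp [SimpleGraph.IsIndepFinset], by simp⟩

lemma induce_eq_of_clique {V : Type*} (G H₁ H₂ : SimpleGraph V) (hG : G = H₁ ⊓ H₂)
    (W : Set V) (hW : H₁.IsClique W) : G.induce W = H₂.induce W := by
  ext u v
  simp only [SimpleGraph.comap_adj, hG, SimpleGraph.inf_adj]
  constructor
  · rintro ⟨-, h⟩; exact h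
  · intro h; exact ⟨hW u.2 v.2 (fun e => h.ne (Subtype.coe_injective e ▸ rfl)), h⟩

theorem phi_eq_one_of_perfect_factor {V : Type*} [Fintype V] [Nonempty V]
    (G H₁ H₂ : SimpleGraph V) (hG : G = H₁ ⊓ H₂)
    (h₁ : IsIntervalGraph H₁) (h₂ : IsPerfectGraph H₂) :
    (∀ W : Finset V, H₁.IsClique (W : Set V) →
      cliqueCoverNum (G.induce (W : Set V)) = _root_.indepNum (G.induce (W : Set V))) ∧
    phi G H₁ = 1 := by
  have key : ∀ W : Finset V, H₁.IsClique (W : Set V) →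
      cliqueCoverNum (G.induce (W : Set V)) = _root_.indepNum (G.induce (W : Set V)) := by
    intro W hW
    rw [induce_eq_of_clique G H₁ H₂ hG _ hW]
    exact h₂ W
  refine ⟨key, ?_⟩
  obtain ⟨v⟩ := (inferInstance : Nonempty V)
  have hmem : (1 : ℝ) ∈ {x : ℝ | ∃ W : Finset V, H₁.IsClique (W : Set V) ∧
      x = (cliqueCoverNum (G.induce (W : Set V)) : ℝ) / (_root_.indepNum (G.induce (W : Set V)) : ℝ)} := by
    refine ⟨{v}, by simp, ?_⟩
    have hc : H₁.IsClique (({v} : Finset V) : Set V) := by simp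
    have : Nonempty ((({v} : Finset V) : Set V)) := ⟨⟨v, by simp⟩⟩
    have hpos := indepNum_ge_one (G.induce (({v} : Finset V) : Set V))
    rw [key {v} hc]
    have h0 : _root_.indepNum (G.induce (({v} : Finset V) : Set V)) ≠ 0 := by omega
    rw [div_self (by exact_mod_cast h0)]
  have hbound : ∀ x ∈ {x : ℝ | ∃ W : Finset V, H₁.IsClique (W : Set V) ∧
      x = (cliqueCoverNum (G.induce (W : Set V)) : ℝ) / (_root_.indepNum (G.induce (W : Set V)) : ℝ)},
      x ≤ 1 := by
    rintro x ⟨W, hW, rfl⟩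
    rw [key W hW]
    rcases eq_or_ne (_root_.indepNum (G.induce (W : Set V))) 0 with h | h
    · simp [h]
    · rw [div_self (by exact_mod_cast h)]
  refine le_antisymm (Real.sSup_le hbound zero_le_one) (le_csSup ⟨1, hbound⟩ hmem)
end

section
/- Let G be a graph with E(G) = E(H₁) ∩ E(H₂), where H₁ is an interval supergraph and H₂ a perfect supergraph of G. Then β(G) ≤ 2·α(G)·(log₂(α(H₁)) + 1). -/
open SimpleGraph

section Aux
variable {V : Type*}

noncomputable def indepOn (G : SimpleGraph V) (U : Finset V) : ℕ :=
  sSup {n | ∃ s : Finset V, s ⊆ U ∧ G.IsIndepFinset s ∧ s.card = n}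

lemma card_le_indepOn [Fintype V] (G : SimpleGraph V) {U s : Finset V}
    (hs : s ⊆ U) (hi : G.IsIndepFinset s) : s.card ≤ indepOn G U := by
  apply le_csSup
  · exact ⟨Fintype.card V, fun n ⟨t, _, _, ht⟩ => ht ▸ Finset.card_le_univ t⟩
  · exact ⟨s, hs, hi, rfl⟩

lemma exists_indepOn [Fintype V] (G : SimpleGraph V) (U : Finset V) :
    ∃ s : Finset V, s ⊆ U ∧ G.IsIndepFinset s ∧ s.card = indepOn G U := by
  have h := Nat.sSup_mem (s := {n | ∃ s : Finset V, s ⊆ U ∧ G.IsIndepFinset s ∧ s.card = n})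
    ⟨0, ∅, by simp, by simp [SimpleGraph.IsIndepFinset], rfl⟩
    ⟨Fintype.card V, fun n ⟨t, _, _, ht⟩ => ht ▸ Finset.card_le_univ t⟩
  exact h

lemma indepOn_mono [Fintype V] (G : SimpleGraph V) {U U' : Finset V} (h : U ⊆ U') :
    indepOn G U ≤ indepOn G U' := by
  obtain ⟨s, hs, hi, hc⟩ := exists_indepOn G U
  exact hc ▸ card_le_indepOn G (hs.trans h) hi

lemma card_le_indepNum [Fintype V] (G : SimpleGraph V) {s : Finset V}
    (hi : G.IsIndepFinset s) : s.card ≤ _root_.indepNum G := by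
  apply le_csSup
  · exact ⟨Fintype.card V, fun n ⟨t, _, ht⟩ => ht ▸ Finset.card_le_univ t⟩
  · exact ⟨s, hi, rfl⟩

lemma indepOn_le_indepNum [Fintype V] (G : SimpleGraph V) (U : Finset V) :
    indepOn G U ≤ _root_.indepNum G := by
  obtain ⟨s, _, hi, hc⟩ := exists_indepOn G U
  exact hc ▸ card_le_indepNum G hi

lemma indepOn_superadd [Fintype V] [DecidableEq V] (G : SimpleGraph V) {U₁ U₂ : Finset V}
    (hd : Disjoint U₁ U₂)
    (hsep : ∀ u ∈ U₁, ∀ v ∈ U₂, ¬ G.Adj u v) :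
    indepOn G U₁ + indepOn G U₂ ≤ indepOn G (U₁ ∪ U₂) := by
  obtain ⟨s₁, hs₁, hi₁, hc₁⟩ := exists_indepOn G U₁
  obtain ⟨s₂, hs₂, hi₂, hc₂⟩ := exists_indepOn G U₂
  have hdisj : Disjoint s₁ s₂ := hd.mono hs₁ hs₂
  have hind : G.IsIndepFinset (s₁ ∪ s₂) := by
    intro a ha b hb hab
    simp only [Finset.coe_union, Set.mem_union, Finset.mem_coe] at ha hb
    rcases ha with ha | ha <;> rcases hb with hb | hb
    · exact hi₁ ha hb hab
    · exact hsep a (hs₁ ha) b (hs₂ hb)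
    · intro h; exact hsep b (hs₁ hb) a (hs₂ ha) h.symm
    · exact hi₂ ha hb hab
  calc indepOn G U₁ + indepOn G U₂ = (s₁ ∪ s₂).card := by
        rw [Finset.card_union_of_disjoint hdisj, hc₁, hc₂]
    _ ≤ indepOn G (U₁ ∪ U₂) :=
        card_le_indepOn G (Finset.union_subset_union hs₁ hs₂) hind

lemma cliqueCoverNum_le [Fintype V] (G : SimpleGraph V) {C : Finset (Finset V)}
    (h : G.IsCliqueCover C) : cliqueCoverNum G ≤ C.card :=
  Nat.sInf_le ⟨C, h, rfl⟩

lemma exists_cliqueCover [Fintype V] (G : SimpleGraph V) :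
    ∃ C : Finset (Finset V), G.IsCliqueCover C ∧ C.card = cliqueCoverNum G := by
  classical
  apply Nat.sInf_mem (s := {n | ∃ C : Finset (Finset V), G.IsCliqueCover C ∧ C.card = n})
  refine ⟨_, (Finset.univ.image fun v => ({v} : Finset V)), ⟨?_, ?_⟩, rfl⟩
  · intro c hc
    simp only [Finset.mem_image] at hc
    obtain ⟨v, _, rfl⟩ := hc
    simp [SimpleGraph.IsClique]
  · intro v
    exact ⟨{v}, Finset.mem_image.2 ⟨v, Finset.mem_univ v, rfl⟩, Finset.mem_singleton_self v⟩

end Aux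

section CoverOfClique
variable {V : Type*} [Fintype V]

lemma exists_indepFinset_card (G : SimpleGraph V) :
    ∃ s : Finset V, G.IsIndepFinset s ∧ s.card = _root_.indepNum G :=
  Nat.sSup_mem (s := {n | ∃ s : Finset V, G.IsIndepFinset s ∧ s.card = n})
    ⟨0, ∅, by simp [SimpleGraph.IsIndepFinset], rfl⟩
    ⟨Fintype.card V, fun n ⟨t, _, ht⟩ => ht ▸ Finset.card_le_univ t⟩

lemma cover_of_clique (G H₁ H₂ : SimpleGraph V) (hG : G = H₁ ⊓ H₂)
    (h₂ : IsPerfectGraph H₂) (W : Finset V) (hW : H₁.IsClique (W : Set V)) :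
    ∃ C : Finset (Finset V), C.card ≤ indepOn G W ∧
      (∀ c ∈ C, G.IsClique (c : Set V) ∧ c ⊆ W) ∧ ∀ v ∈ W, ∃ c ∈ C, v ∈ c := by
  classical
  have hGadj : ∀ u v, G.Adj u v ↔ H₁.Adj u v ∧ H₂.Adj u v := by
    intro u v; rw [hG]; rfl
  obtain ⟨C', hC', hcard'⟩ := exists_cliqueCover (H₂.induce (W : Set V))
  obtain ⟨s', hs', hscard'⟩ := exists_indepFinset_card (H₂.induce (W : Set V))
  -- the independent set, pushed to V
  set t : Finset V := s'.image Subtype.val with ht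
  have htW : t ⊆ W := by
    intro x hx
    obtain ⟨⟨x, hxW⟩, _, rfl⟩ := Finset.mem_image.1 hx
    exact hxW
  have htcard : t.card = s'.card := Finset.card_image_of_injective _ Subtype.val_injective
  have htind : G.IsIndepFinset t := by
    intro x hx y hy hxy hadj
    simp only [ht, Finset.coe_image, Set.mem_image, Finset.mem_coe] at hx hy
    obtain ⟨x', hx', rfl⟩ := hx
    obtain ⟨y', hy', rfl⟩ := hy
    have hne : x' ≠ y' := fun h => hxy (by rw [h])
    exact hs' hx' hy' hne (by simpa using ((hGadj _ _).1 hadj).2)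
  -- the cover, pushed to V
  set C : Finset (Finset V) := C'.image (Finset.image Subtype.val) with hC
  refine ⟨C, ?_, ?_, ?_⟩
  · calc C.card ≤ C'.card := Finset.card_image_le
      _ = _root_.indepNum (H₂.induce (W : Set V)) := by rw [hcard', h₂ W]
      _ = t.card := by rw [htcard, hscard']
      _ ≤ indepOn G W := card_le_indepOn G htW htind
  · intro c hc
    obtain ⟨c', hc', rfl⟩ := Finset.mem_image.1 hc
    have hsubW : (c'.image Subtype.val) ⊆ W := by
      intro x hx
      obtain ⟨⟨x, hxW⟩, _, rfl⟩ := Finset.mem_image.1 hx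
      exact hxW
    refine ⟨?_, hsubW⟩
    intro x hx y hy hxy
    simp only [Finset.coe_image, Set.mem_image, Finset.mem_coe] at hx hy
    obtain ⟨x', hx', rfl⟩ := hx
    obtain ⟨y', hy', rfl⟩ := hy
    have hne : x' ≠ y' := fun h => hxy (by rw [h])
    have h2 : H₂.Adj (x' : V) (y' : V) := by simpa using hC'.1 c' hc' hx' hy' hne
    have h1 : H₁.Adj (x' : V) (y' : V) := hW x'.2 y'.2 hxy
    exact (hGadj _ _).2 ⟨h1, h2⟩
  · intro v hv
    obtain ⟨c', hc', hvc'⟩ := hC'.2 ⟨v, hv⟩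
    exact ⟨c'.image Subtype.val, Finset.mem_image.2 ⟨c', hc', rfl⟩,
      Finset.mem_image.2 ⟨⟨v, hv⟩, hvc', rfl⟩⟩

end CoverOfClique

section Split

lemma exists_split (S : Finset ℝ) (hS : S.Nonempty) (m : ℕ) (hm : 1 ≤ m) :
    ∃ p ∈ S, (S.filter (fun x => x < p)).card < m ∧
      (S.filter (fun x => p < x)).card ≤ S.card - m := by
  classical
  set k := min m S.card with hk
  have hk1 : 1 ≤ k := le_min hm hS.card_pos
  have hklt : k - 1 < S.card := lt_of_lt_of_le (Nat.sub_lt hk1 one_pos) (min_le_right _ _)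
  set e := S.orderIsoOfFin rfl with he
  set pp := e ⟨k-1, hklt⟩ with hpp
  have hppS : (pp : ℝ) ∈ S := pp.2
  refine ⟨↑pp, hppS, ?_, ?_⟩
  · have h1 : (S.filter (fun x => x < ↑pp)).card ≤ (Finset.range (k-1)).card := by
      apply Finset.card_le_card_of_injOn
        (fun x => if hx : x ∈ S then ((e.symm ⟨x, hx⟩ : Fin S.card) : ℕ) else 0)
      · intro x hx
        rw [Finset.mem_coe, Finset.mem_filter] at hx
        beta_reduce
        rw [dif_pos hx.1, Finset.mem_coe, Finset.mem_range]
        have hlt : (⟨x, hx.1⟩ : {y // y ∈ S}) < pp := Subtype.mk_lt_mk.2 hx.2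
        have h := e.symm.lt_iff_lt.2 hlt
        have h0 : e.symm pp = ⟨k - 1, hklt⟩ := e.symm_apply_apply _
        rw [h0] at h
        exact h
      · intro x hx y hy hxy
        rw [Finset.coe_filter, Set.mem_setOf_eq] at hx hy
        simp only [dif_pos hx.1, dif_pos hy.1] at hxy
        have : (⟨x, hx.1⟩ : {y // y ∈ S}) = ⟨y, hy.1⟩ :=
          e.symm.injective (Fin.ext hxy)
        exact Subtype.mk_eq_mk.1 this
    rw [Finset.card_range] at h1
    exact lt_of_le_of_lt h1 (lt_of_lt_of_le (Nat.sub_lt hk1 one_pos) (min_le_left _ _))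
  · have h2 : (S.filter (fun x => ↑pp < x)).card ≤ (Finset.Ico k S.card).card := by
      apply Finset.card_le_card_of_injOn
        (fun x => if hx : x ∈ S then ((e.symm ⟨x, hx⟩ : Fin S.card) : ℕ) else 0)
      · intro x hx
        rw [Finset.mem_coe, Finset.mem_filter] at hx
        beta_reduce
        rw [dif_pos hx.1, Finset.mem_coe, Finset.mem_Ico]
        constructor
        · have hlt : pp < (⟨x, hx.1⟩ : {y // y ∈ S}) := Subtype.mk_lt_mk.2 hx.2
          have h := e.symm.lt_iff_lt.2 hlt
          have h0 : e.symm pp = ⟨k - 1, hklt⟩ := e.symm_apply_apply _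
          rw [h0] at h
          have h3 : k - 1 < ((e.symm ⟨x, hx.1⟩ : Fin S.card) : ℕ) := h
          omega
        · exact (e.symm ⟨x, hx.1⟩).2
      · intro x hx y hy hxy
        rw [Finset.coe_filter, Set.mem_setOf_eq] at hx hy
        simp only [dif_pos hx.1, dif_pos hy.1] at hxy
        have : (⟨x, hx.1⟩ : {y // y ∈ S}) = ⟨y, hy.1⟩ :=
          e.symm.injective (Fin.ext hxy)
        exact Subtype.mk_eq_mk.1 this
    rw [Nat.card_Ico] at h2
    rcases le_total m S.card with h | h
    · rwa [hk, min_eq_left h] at h2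
    · omega
end Split

section Rec
variable {V : Type*} [Fintype V] [DecidableEq V]

lemma clique_of_common_point (H₁ : SimpleGraph V) (a b : V → ℝ)
    (hadj : ∀ u v, H₁.Adj u v ↔ u ≠ v ∧
      (Set.Icc (a u) (b u) ∩ Set.Icc (a v) (b v)).Nonempty)
    (U : Finset V) (p : ℝ) (hp : ∀ v ∈ U, a v ≤ p ∧ p ≤ b v) :
    H₁.IsClique (U : Set V) := by
  intro u hu v hv huv
  exact (hadj u v).2 ⟨huv, p, ⟨(hp u hu).1, (hp u hu).2⟩, ⟨(hp v hv).1, (hp v hv).2⟩⟩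

lemma cover_rec (G H₁ H₂ : SimpleGraph V) (hG : G = H₁ ⊓ H₂)
    (h₂ : IsPerfectGraph H₂) (a b : V → ℝ)
    (hadj : ∀ u v, H₁.Adj u v ↔ u ≠ v ∧
      (Set.Icc (a u) (b u) ∩ Set.Icc (a v) (b v)).Nonempty) :
    ∀ n : ℕ, ∀ S : Finset ℝ, ∀ U : Finset V, S.card ≤ 2^n →
      (∀ v ∈ U, ∃ p ∈ S, a v ≤ p ∧ p ≤ b v) →
      ∃ C : Finset (Finset V), C.card ≤ (n+1) * indepOn G U ∧
        (∀ c ∈ C, G.IsClique (c : Set V)) ∧ ∀ v ∈ U, ∃ c ∈ C, v ∈ c := by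
  intro n
  induction n with
  | zero =>
    intro S U hScard hpierce
    rcases Finset.eq_empty_or_nonempty U with rfl | ⟨v₀, hv₀⟩
    · exact ⟨∅, by simp, by simp, by simp⟩
    · obtain ⟨p₀, hp₀S, _⟩ := hpierce v₀ hv₀
      have hall : ∀ v ∈ U, a v ≤ p₀ ∧ p₀ ≤ b v := by
        intro v hv
        obtain ⟨p, hpS, hp⟩ := hpierce v hv
        have : p = p₀ := Finset.card_le_one.1 (by simpa using hScard) p hpS p₀ hp₀S
        exact this ▸ hp
      obtain ⟨C, hC1, hC2, hC3⟩ := cover_of_clique G H₁ H₂ hG h₂ U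
        (clique_of_common_point H₁ a b hadj U p₀ hall)
      exact ⟨C, by simpa using hC1, fun c hc => (hC2 c hc).1, hC3⟩
  | succ n ih =>
    intro S U hScard hpierce
    rcases Finset.eq_empty_or_nonempty U with rfl | ⟨v₀, hv₀⟩
    · exact ⟨∅, by simp, by simp, by simp⟩
    have hSne : S.Nonempty := by
      obtain ⟨p, hpS, _⟩ := hpierce v₀ hv₀
      exact ⟨p, hpS⟩
    obtain ⟨p, hpS, hsplit₁, hsplit₂⟩ := exists_split S hSne (2^n) Nat.one_le_two_pow
    set U₁ := U.filter (fun v => b v < p) with hU₁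
    set U₂ := U.filter (fun v => p < a v) with hU₂
    set W := U.filter (fun v => a v ≤ p ∧ p ≤ b v) with hW
    have hnonempty_int : ∀ v ∈ U, a v ≤ b v := by
      intro v hv
      obtain ⟨q, _, hq1, hq2⟩ := hpierce v hv
      linarith
    -- recursive calls
    have hcard₁ : (S.filter (fun x => x < p)).card ≤ 2^n := le_of_lt hsplit₁
    have hcard₂ : (S.filter (fun x => p < x)).card ≤ 2^n := by
      have h2 : (2:ℕ)^(n+1) = 2^n + 2^n := by ring
      omega
    have hpierce₁ : ∀ v ∈ U₁, ∃ q ∈ S.filter (fun x => x < p), a v ≤ q ∧ q ≤ b v := by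
      intro v hv
      rw [hU₁, Finset.mem_filter] at hv
      obtain ⟨q, hqS, hq1, hq2⟩ := hpierce v hv.1
      exact ⟨q, Finset.mem_filter.2 ⟨hqS, by linarith [hv.2]⟩, hq1, hq2⟩
    have hpierce₂ : ∀ v ∈ U₂, ∃ q ∈ S.filter (fun x => p < x), a v ≤ q ∧ q ≤ b v := by
      intro v hv
      rw [hU₂, Finset.mem_filter] at hv
      obtain ⟨q, hqS, hq1, hq2⟩ := hpierce v hv.1
      exact ⟨q, Finset.mem_filter.2 ⟨hqS, by linarith [hv.2]⟩, hq1, hq2⟩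
    obtain ⟨C₁, hC₁card, hC₁cl, hC₁cov⟩ := ih _ U₁ hcard₁ hpierce₁
    obtain ⟨C₂, hC₂card, hC₂cl, hC₂cov⟩ := ih _ U₂ hcard₂ hpierce₂
    -- middle part
    have hWp : ∀ v ∈ W, a v ≤ p ∧ p ≤ b v := fun v hv => (Finset.mem_filter.1 hv).2
    obtain ⟨CW, hCWcard, hCWcl, hCWcov⟩ := cover_of_clique G H₁ H₂ hG h₂ W
      (clique_of_common_point H₁ a b hadj W p hWp)
    refine ⟨C₁ ∪ C₂ ∪ CW, ?_, ?_, ?_⟩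
    · -- cardinality bound
      have hdisj : Disjoint U₁ U₂ := by
        rw [Finset.disjoint_left]
        intro v hv1 hv2
        rw [hU₁, Finset.mem_filter] at hv1
        rw [hU₂, Finset.mem_filter] at hv2
        linarith [hnonempty_int v hv1.1, hv1.2, hv2.2]
      have hsep : ∀ u ∈ U₁, ∀ v ∈ U₂, ¬ G.Adj u v := by
        intro u hu v hv hAdj
        rw [hU₁, Finset.mem_filter] at hu
        rw [hU₂, Finset.mem_filter] at hv
        have h1 : H₁.Adj u v := by rw [hG] at hAdj; exact hAdj.1
        obtain ⟨_, x, ⟨_, hx1⟩, ⟨hx2, _⟩⟩ := (hadj u v).1 h1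
        linarith [hu.2, hv.2]
      have hsum : indepOn G U₁ + indepOn G U₂ ≤ indepOn G U := by
        calc indepOn G U₁ + indepOn G U₂ ≤ indepOn G (U₁ ∪ U₂) :=
              indepOn_superadd G hdisj hsep
          _ ≤ indepOn G U := indepOn_mono G (Finset.union_subset
              (Finset.filter_subset _ _) (Finset.filter_subset _ _))
      have hWU : indepOn G W ≤ indepOn G U := indepOn_mono G (Finset.filter_subset _ _)
      calc (C₁ ∪ C₂ ∪ CW).card ≤ (C₁ ∪ C₂).card + CW.card := Finset.card_union_le _ _
        _ ≤ C₁.card + C₂.card + CW.card := by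
            have := Finset.card_union_le C₁ C₂; omega
        _ ≤ (n+1) * indepOn G U₁ + (n+1) * indepOn G U₂ + indepOn G W := by omega
        _ = (n+1) * (indepOn G U₁ + indepOn G U₂) + indepOn G W := by ring
        _ ≤ (n+1) * indepOn G U + indepOn G U := by
            have := Nat.mul_le_mul_left (n+1) hsum
            omega
        _ = (n+1+1) * indepOn G U := by ring
    · intro c hc
      rcases Finset.mem_union.1 hc with hc | hc
      · rcases Finset.mem_union.1 hc with hc | hc
        · exact hC₁cl c hc
        · exact hC₂cl c hc
      · exact (hCWcl c hc).1
    · intro v hv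
      by_cases hb : b v < p
      · obtain ⟨c, hc, hvc⟩ := hC₁cov v (Finset.mem_filter.2 ⟨hv, hb⟩)
        exact ⟨c, Finset.mem_union_left _ (Finset.mem_union_left _ hc), hvc⟩
      by_cases ha : p < a v
      · obtain ⟨c, hc, hvc⟩ := hC₂cov v (Finset.mem_filter.2 ⟨hv, ha⟩)
        exact ⟨c, Finset.mem_union_left _ (Finset.mem_union_right _ hc), hvc⟩
      · obtain ⟨c, hc, hvc⟩ := hCWcov v (Finset.mem_filter.2 ⟨hv, le_of_not_gt ha, le_of_not_gt hb⟩)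
        exact ⟨c, Finset.mem_union_right _ hc, hvc⟩
end Rec

section Pierce
variable {V : Type*} [Fintype V] [DecidableEq V]

lemma exists_piercing (H₁ : SimpleGraph V) (a b : V → ℝ)
    (hadj : ∀ u v, H₁.Adj u v ↔ u ≠ v ∧
      (Set.Icc (a u) (b u) ∩ Set.Icc (a v) (b v)).Nonempty) :
    ∀ N : ℕ, ∀ U : Finset V, U.card ≤ N → ∃ S : Finset ℝ,
      S.card ≤ indepOn H₁ U ∧ ∀ v ∈ U, a v ≤ b v → ∃ p ∈ S, a v ≤ p ∧ p ≤ b v := by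
  intro N
  induction N with
  | zero =>
    intro U hU
    rw [Nat.le_zero, Finset.card_eq_zero] at hU
    exact ⟨∅, by simp, by simp [hU]⟩
  | succ N ih =>
    intro U hU
    set U' := U.filter (fun v => a v ≤ b v) with hU'
    rcases Finset.eq_empty_or_nonempty U' with he | hne
    · refine ⟨∅, by simp, fun v hv hab => absurd ?_ (Finset.notMem_empty v)⟩
      rw [← he, hU']
      exact Finset.mem_filter.2 ⟨hv, hab⟩
    obtain ⟨v₀, hv₀, hv₀min⟩ := Finset.exists_min_image U' b hne
    have hv₀U : v₀ ∈ U := (Finset.mem_filter.1 hv₀).1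
    have hv₀ab : a v₀ ≤ b v₀ := (Finset.mem_filter.1 hv₀).2
    set p := b v₀ with hp
    set U'' := U.filter (fun v => p < a v) with hU''
    have hv₀notin : v₀ ∉ U'' := by
      rw [hU'', Finset.mem_filter]
      push_neg
      intro _
      linarith
    have hcard : U''.card ≤ N := by
      have : U''.card < U.card :=
        Finset.card_lt_card ⟨Finset.filter_subset _ _, fun hsub => hv₀notin (hsub hv₀U)⟩
      omega
    obtain ⟨S'', hS''card, hS''pierce⟩ := ih U'' hcard
    refine ⟨insert p S'', ?_, ?_⟩
    · have hstep : indepOn H₁ U'' + 1 ≤ indepOn H₁ U := by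
        obtain ⟨s, hsU, hsind, hscard⟩ := exists_indepOn H₁ U''
        have hv₀s : v₀ ∉ s := fun h => hv₀notin (hsU h)
        have hind : H₁.IsIndepFinset (insert v₀ s) := by
          intro x hx y hy hxy
          simp only [Finset.coe_insert, Set.mem_insert_iff, Finset.mem_coe] at hx hy
          have key : ∀ u ∈ s, ¬ H₁.Adj v₀ u := by
            intro u hu hAdj
            obtain ⟨_, x, ⟨_, hx1⟩, ⟨hx2, _⟩⟩ := (hadj v₀ u).1 hAdj
            have := (Finset.mem_filter.1 (hsU hu)).2
            linarith
          rcases hx with rfl | hx <;> rcases hy with rfl | hy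
          · exact absurd rfl hxy
          · exact key y hy
          · intro h; exact key x hx h.symm
          · exact hsind hx hy hxy
        have hsub : insert v₀ s ⊆ U :=
          Finset.insert_subset hv₀U (hsU.trans (Finset.filter_subset _ _))
        have := card_le_indepOn H₁ hsub hind
        rw [Finset.card_insert_of_notMem hv₀s, hscard] at this
        omega
      calc (insert p S'').card ≤ S''.card + 1 := Finset.card_insert_le _ _
        _ ≤ indepOn H₁ U'' + 1 := by omega
        _ ≤ indepOn H₁ U := hstep
    · intro v hv hab
      by_cases hav : a v ≤ p
      · refine ⟨p, Finset.mem_insert_self _ _, hav, ?_⟩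
        exact hv₀min v (Finset.mem_filter.2 ⟨hv, hab⟩)
      · push_neg at hav
        obtain ⟨q, hqS, hq⟩ := hS''pierce v (Finset.mem_filter.2 ⟨hv, hav⟩) hab
        exact ⟨q, Finset.mem_insert_of_mem hqS, hq⟩
end Pierce

section Final
theorem clique_cover_bound_interval_perfect {V : Type*} [Fintype V]
    (G H₁ H₂ : SimpleGraph V) (hG : G = H₁ ⊓ H₂)
    (h₁ : IsIntervalGraph H₁) (h₂ : IsPerfectGraph H₂) :
    (cliqueCoverNum G : ℝ) ≤
      2 * (_root_.indepNum G : ℝ) * (Real.logb 2 (_root_.indepNum H₁ : ℝ) + 1) := by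
  classical
  obtain ⟨a, b, hadj⟩ := h₁
  rcases isEmpty_or_nonempty V with hV | hV
  · have h0 : cliqueCoverNum G ≤ 0 := by
      apply cliqueCoverNum_le (C := ∅)
      exact ⟨by simp, fun v => absurd trivial (IsEmpty.elim hV v)⟩
    have h0' : cliqueCoverNum G = 0 := Nat.le_zero.1 h0
    have hα : _root_.indepNum G = 0 := by
      obtain ⟨s, _, hc⟩ := exists_indepFinset_card G
      rw [← hc, Finset.card_eq_zero.2 (Finset.eq_empty_of_isEmpty s)]
    rw [h0', hα]
    simp
  -- main case
  set k := _root_.indepNum H₁ with hk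
  have hk1 : 1 ≤ k := by
    obtain ⟨v⟩ := hV
    have : ({v} : Finset V).card ≤ k := card_le_indepNum H₁ (by simp [SimpleGraph.IsIndepFinset])
    simpa using this
  set n := Nat.clog 2 k with hn
  -- piercing set
  obtain ⟨S, hScard, hSpierce⟩ := exists_piercing H₁ a b hadj (Finset.univ.card) Finset.univ le_rfl
  have hSk : S.card ≤ k := hScard.trans ((indepOn_le_indepNum H₁ _))
  have hS2n : S.card ≤ 2^n := hSk.trans ((Nat.clog_le_iff_le_pow one_lt_two).1 le_rfl)
  -- good vertices
  set Ug := Finset.univ.filter (fun v => a v ≤ b v) with hUg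
  obtain ⟨Cg, hCgcard, hCgcl, hCgcov⟩ := cover_rec G H₁ H₂ hG h₂ a b hadj n S Ug hS2n
    (fun v hv => hSpierce v (Finset.mem_univ v) (Finset.mem_filter.1 hv).2)
  -- bad vertices
  set Ub := Finset.univ.filter (fun v => ¬ a v ≤ b v) with hUb
  have hUbind : G.IsIndepFinset Ub := by
    intro u hu v hv huv hAdj
    have h1 : H₁.Adj u v := by rw [hG] at hAdj; exact hAdj.1
    obtain ⟨_, x, ⟨hx1, hx2⟩, _⟩ := (hadj u v).1 h1
    simp only [hUb, Finset.coe_filter, Set.mem_setOf_eq] at hu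
    exact hu.2 (le_trans hx1 hx2)
  set Cb := Ub.image (fun v => ({v} : Finset V)) with hCb
  -- assemble cover
  have hcover : G.IsCliqueCover (Cg ∪ Cb) := by
    constructor
    · intro c hc
      rcases Finset.mem_union.1 hc with hc | hc
      · exact hCgcl c hc
      · obtain ⟨v, _, rfl⟩ := Finset.mem_image.1 hc
        simp [SimpleGraph.IsClique]
    · intro v
      by_cases hab : a v ≤ b v
      · obtain ⟨c, hc, hvc⟩ := hCgcov v (Finset.mem_filter.2 ⟨Finset.mem_univ v, hab⟩)
        exact ⟨c, Finset.mem_union_left _ hc, hvc⟩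
      · refine ⟨{v}, Finset.mem_union_right _ ?_, Finset.mem_singleton_self v⟩
        exact Finset.mem_image.2 ⟨v, Finset.mem_filter.2 ⟨Finset.mem_univ v, hab⟩, rfl⟩
  -- counting
  set α := _root_.indepNum G with hα
  have hβ : cliqueCoverNum G ≤ (n + 2) * α := by
    have h1 : Cg.card ≤ (n+1) * α :=
      hCgcard.trans (Nat.mul_le_mul_left _ (indepOn_le_indepNum G _))
    have h2 : Cb.card ≤ α := by
      calc Cb.card ≤ Ub.card := Finset.card_image_le
        _ ≤ α := card_le_indepNum G hUbind
    calc cliqueCoverNum G ≤ (Cg ∪ Cb).card := cliqueCoverNum_le G hcover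
      _ ≤ Cg.card + Cb.card := Finset.card_union_le _ _
      _ ≤ (n+1) * α + α := by omega
      _ = (n+2) * α := by ring
  -- real arithmetic
  have hlogb0 : (0:ℝ) ≤ Real.logb 2 k := by
    apply Real.logb_nonneg one_lt_two
    exact_mod_cast hk1
  have hnlog : (n : ℝ) ≤ 2 * Real.logb 2 k := by
    rcases eq_or_lt_of_le hk1 with h1 | h2
    · have : n = 0 := by rw [hn, ← h1]; simp
      rw [this, ← h1]
      simp
    · -- k ≥ 2
      have hk2 : 2 ≤ k := h2
      have hclog : n ≤ Nat.log 2 k + 1 := by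
        rw [hn]
        apply (Nat.clog_le_iff_le_pow one_lt_two).2
        exact le_of_lt (Nat.lt_pow_succ_log_self one_lt_two k)
      have hlog_le : (Nat.log 2 k : ℝ) ≤ Real.logb 2 k := by
        have hpow : (2:ℝ)^(Nat.log 2 k) ≤ k := by
          exact_mod_cast Nat.pow_log_le_self 2 (by omega)
        calc (Nat.log 2 k : ℝ) = Real.logb 2 ((2:ℝ)^(Nat.log 2 k)) := by
              rw [Real.logb_pow, Real.logb_self_eq_one (by norm_num)]
              ring
          _ ≤ Real.logb 2 k := Real.logb_le_logb_of_le one_lt_two (by positivity) hpow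
      have hlogb1 : (1:ℝ) ≤ Real.logb 2 k := by
        calc (1:ℝ) = Real.logb 2 2 := (Real.logb_self_eq_one (by norm_num)).symm
          _ ≤ Real.logb 2 k := Real.logb_le_logb_of_le one_lt_two (by norm_num) (by exact_mod_cast hk2)
      have : (n:ℝ) ≤ (Nat.log 2 k : ℝ) + 1 := by exact_mod_cast hclog
      linarith
  have hα0 : (0:ℝ) ≤ (α:ℝ) := Nat.cast_nonneg α
  calc (cliqueCoverNum G : ℝ) ≤ ((n + 2) * α : ℕ) := by exact_mod_cast hβ
    _ = ((n:ℝ) + 2) * α := by push_cast; ring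
    _ ≤ (2 * Real.logb 2 k + 2) * α := by
        apply mul_le_mul_of_nonneg_right _ hα0
        linarith
    _ = 2 * (α:ℝ) * (Real.logb 2 k + 1) := by ring
end Final
end

section
/- Let t ≥ 2 and let G be a graph with E(G) = ⋂_{i=1}^{t} E(H_i), where H₁,...,H_{t-1} are interval supergraphs of G and H_t is a perfect supergraph of G. Then β(G) ≤ 2^{t-1}·α(G)·∏_{i=1}^{t-1}(log₂(α(H_i)) + 1). -/
open SimpleGraph

namespace CCAux

variable {V : Type*}

/-- max size of a `G`-independent subset of `s` -/
noncomputable def aOn (G : SimpleGraph V) (s : Finset V) : ℕ :=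
  sSup {n | ∃ t : Finset V, t ⊆ s ∧ G.IsIndepFinset t ∧ t.card = n}

/-- min number of `G`-cliques inside `s` covering `s` -/
noncomputable def bOn (G : SimpleGraph V) (s : Finset V) : ℕ :=
  sInf {n | ∃ C : Finset (Finset V), (∀ c ∈ C, c ⊆ s ∧ G.IsClique (c : Set V)) ∧
    (∀ v ∈ s, ∃ c ∈ C, v ∈ c) ∧ C.card = n}

lemma aOn_set_nonempty (G : SimpleGraph V) (s : Finset V) :
    {n | ∃ t : Finset V, t ⊆ s ∧ G.IsIndepFinset t ∧ t.card = n}.Nonempty :=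
  ⟨0, ∅, by simp [SimpleGraph.IsIndepFinset]⟩

lemma aOn_set_bdd (G : SimpleGraph V) (s : Finset V) :
    BddAbove {n | ∃ t : Finset V, t ⊆ s ∧ G.IsIndepFinset t ∧ t.card = n} :=
  ⟨s.card, by rintro n ⟨t, ht, _, rfl⟩; exact Finset.card_le_card ht⟩

lemma exists_aOn_witness (G : SimpleGraph V) (s : Finset V) :
    ∃ t : Finset V, t ⊆ s ∧ G.IsIndepFinset t ∧ t.card = aOn G s :=
  Nat.sSup_mem (aOn_set_nonempty G s) (aOn_set_bdd G s)

lemma le_aOn (G : SimpleGraph V) {s t : Finset V} (hts : t ⊆ s)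
    (hind : G.IsIndepFinset t) : t.card ≤ aOn G s :=
  le_csSup (aOn_set_bdd G s) ⟨t, hts, hind, rfl⟩

lemma aOn_mono (G : SimpleGraph V) {s₁ s₂ : Finset V} (h : s₁ ⊆ s₂) :
    aOn G s₁ ≤ aOn G s₂ := by
  apply csSup_le (aOn_set_nonempty G s₁)
  rintro n ⟨t, ht, hind, rfl⟩
  exact le_aOn G (ht.trans h) hind

lemma aOn_anti {G K : SimpleGraph V} (h : G ≤ K) (s : Finset V) :
    aOn K s ≤ aOn G s := by
  apply csSup_le (aOn_set_nonempty K s)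
  rintro n ⟨t, ht, hind, rfl⟩
  exact le_aOn G ht (fun a ha b hb hab hadj => hind ha hb hab (h hadj))

lemma aOn_empty (G : SimpleGraph V) : aOn G ∅ = 0 := by
  apply le_antisymm _ (Nat.zero_le _)
  apply csSup_le (aOn_set_nonempty G ∅)
  rintro n ⟨t, ht, _, rfl⟩
  simp [Finset.subset_empty.mp ht]

lemma one_le_aOn (G : SimpleGraph V) {s : Finset V} {v : V} (hv : v ∈ s) :
    1 ≤ aOn G s := by
  have := le_aOn G (t := {v}) (by simpa using hv) (by simp [SimpleGraph.IsIndepFinset])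
  simpa using this

lemma eq_empty_of_aOn_eq_zero (G : SimpleGraph V) {s : Finset V} (h : aOn G s = 0) :
    s = ∅ := by
  by_contra hne
  obtain ⟨v, hv⟩ := Finset.nonempty_iff_ne_empty.mpr hne
  have := one_le_aOn G hv
  omega

/-- superadditivity of aOn over parts with no edges in between -/
lemma aOn_add_le [DecidableEq V] (G : SimpleGraph V) {s₁ s₂ : Finset V} (hd : Disjoint s₁ s₂)
    (hcross : ∀ u ∈ s₁, ∀ w ∈ s₂, ¬ G.Adj u w) :
    aOn G s₁ + aOn G s₂ ≤ aOn G (s₁ ∪ s₂) := by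
  obtain ⟨t₁, ht₁, hi₁, hc₁⟩ := exists_aOn_witness G s₁
  obtain ⟨t₂, ht₂, hi₂, hc₂⟩ := exists_aOn_witness G s₂
  have hdt : Disjoint t₁ t₂ := hd.mono ht₁ ht₂
  have hind : G.IsIndepFinset (t₁ ∪ t₂) := by
    intro a ha b hb hab
    simp only [Finset.coe_union, Set.mem_union, Finset.mem_coe] at ha hb
    rcases ha with ha | ha <;> rcases hb with hb | hb
    · exact hi₁ ha hb hab
    · exact hcross a (ht₁ ha) b (ht₂ hb)
    · exact fun hadj => hcross b (ht₁ hb) a (ht₂ ha) hadj.symm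
    · exact hi₂ ha hb hab
  have := le_aOn G (Finset.union_subset_union ht₁ ht₂) hind
  rwa [Finset.card_union_of_disjoint hdt, hc₁, hc₂] at this

lemma bOn_set_nonempty [DecidableEq V] (G : SimpleGraph V) (s : Finset V) :
    {n | ∃ C : Finset (Finset V), (∀ c ∈ C, c ⊆ s ∧ G.IsClique (c : Set V)) ∧
      (∀ v ∈ s, ∃ c ∈ C, v ∈ c) ∧ C.card = n}.Nonempty := by
  refine ⟨(s.image fun v => ({v} : Finset V)).card, s.image fun v => ({v} : Finset V), ?_, ?_, rfl⟩
  · rintro c hc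
    obtain ⟨v, hv, rfl⟩ := Finset.mem_image.mp hc
    exact ⟨by simpa using hv, by simp [SimpleGraph.isClique_singleton]⟩
  · intro v hv
    exact ⟨{v}, Finset.mem_image_of_mem _ hv, by simp⟩

lemma exists_bOn_witness [DecidableEq V] (G : SimpleGraph V) (s : Finset V) :
    ∃ C : Finset (Finset V), (∀ c ∈ C, c ⊆ s ∧ G.IsClique (c : Set V)) ∧
      (∀ v ∈ s, ∃ c ∈ C, v ∈ c) ∧ C.card = bOn G s :=
  Nat.sInf_mem (bOn_set_nonempty G s)

lemma bOn_le (G : SimpleGraph V) {s : Finset V} {C : Finset (Finset V)}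
    (hcl : ∀ c ∈ C, c ⊆ s ∧ G.IsClique (c : Set V)) (hcov : ∀ v ∈ s, ∃ c ∈ C, v ∈ c) :
    bOn G s ≤ C.card :=
  Nat.sInf_le ⟨C, hcl, hcov, rfl⟩

lemma bOn_empty (G : SimpleGraph V) : bOn G ∅ = 0 := by
  have : bOn G (∅ : Finset V) ≤ (∅ : Finset (Finset V)).card :=
    bOn_le G (by simp) (by simp)
  simpa using this

lemma bOn_le_card [DecidableEq V] (G : SimpleGraph V) (s : Finset V) : bOn G s ≤ s.card := by
  refine le_trans (bOn_le G (C := s.image fun v => ({v} : Finset V)) ?_ ?_) Finset.card_image_le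
  · rintro c hc
    obtain ⟨v, hv, rfl⟩ := Finset.mem_image.mp hc
    exact ⟨by simpa using hv, by simp [SimpleGraph.isClique_singleton]⟩
  · intro v hv
    exact ⟨{v}, Finset.mem_image_of_mem _ hv, by simp⟩

/-- subadditivity of bOn over a cover by two parts -/
lemma bOn_union_le [DecidableEq V] (G : SimpleGraph V) {s s₁ s₂ : Finset V}
    (h1 : s₁ ⊆ s) (h2 : s₂ ⊆ s) (hcov : s ⊆ s₁ ∪ s₂) :
    bOn G s ≤ bOn G s₁ + bOn G s₂ := by
  obtain ⟨C₁, hC₁, hcov₁, hc₁⟩ := exists_bOn_witness G s₁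
  obtain ⟨C₂, hC₂, hcov₂, hc₂⟩ := exists_bOn_witness G s₂
  have := bOn_le G (C := C₁ ∪ C₂) (s := s) ?_ ?_
  · calc bOn G s ≤ (C₁ ∪ C₂).card := this
      _ ≤ C₁.card + C₂.card := Finset.card_union_le _ _
      _ = _ := by rw [hc₁, hc₂]
  · intro c hc
    rcases Finset.mem_union.mp hc with h | h
    · exact ⟨(hC₁ c h).1.trans h1, (hC₁ c h).2⟩
    · exact ⟨(hC₂ c h).1.trans h2, (hC₂ c h).2⟩
  · intro v hv
    rcases Finset.mem_union.mp (hcov hv) with h | h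
    · obtain ⟨c, hc, hvc⟩ := hcov₁ v h
      exact ⟨c, Finset.mem_union_left _ hc, hvc⟩
    · obtain ⟨c, hc, hvc⟩ := hcov₂ v h
      exact ⟨c, Finset.mem_union_right _ hc, hvc⟩



lemma induce_adj' {S : Set V} (G : SimpleGraph V) (u v : ↥S) :
    (G.induce S).Adj u v ↔ G.Adj ↑u ↑v := by
  simp [SimpleGraph.comap_adj, Function.Embedding.coe_subtype]

/-- T2: `aOn` equals `indepNum` of the induced subgraph. -/
lemma aOn_eq_indepNum [DecidableEq V] (G : SimpleGraph V) (s : Finset V) :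
    aOn G s = _root_.indepNum (G.induce (s : Set V)) := by
  apply le_antisymm
  · apply csSup_le (aOn_set_nonempty G s)
    rintro n ⟨t, hts, hind, rfl⟩
    have hbdd : BddAbove {n | ∃ u : Finset ↥(s : Set V), (G.induce (s : Set V)).IsIndepFinset u ∧ u.card = n} := by
      classical
      exact ⟨s.card, by
        rintro n ⟨u, _, rfl⟩
        calc u.card ≤ (Finset.univ : Finset ↥(s : Set V)).card := Finset.card_le_card (Finset.subset_univ _)
          _ = s.card := by simp⟩
    apply le_csSup hbdd
    refine ⟨t.subtype (fun v => v ∈ (s : Set V)), ?_, ?_⟩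
    · intro a ha b hb hab hadj
      rw [Finset.mem_coe, Finset.mem_subtype] at ha hb
      rw [induce_adj'] at hadj
      exact hind ha hb (fun h => hab (Subtype.ext h)) hadj
    · have : (t.subtype (fun v => v ∈ (s : Set V))).map (Function.Embedding.subtype _) = t :=
        Finset.subtype_map_of_mem (fun x hx => by simpa using hts hx)
      calc (t.subtype (fun v => v ∈ (s : Set V))).card
          = ((t.subtype (fun v => v ∈ (s : Set V))).map (Function.Embedding.subtype _)).card :=
            (Finset.card_map _).symm
        _ = t.card := by rw [this]
  · unfold _root_.indepNum
    refine csSup_le ?_ ?_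
    · exact ⟨0, ∅, by simp [SimpleGraph.IsIndepFinset], by simp⟩
    rintro n ⟨u, hind, rfl⟩
    have : (u.image (Subtype.val)).card = u.card := Finset.card_image_of_injective _ Subtype.coe_injective
    rw [← this]
    apply le_aOn
    · intro x hx
      obtain ⟨a, _, rfl⟩ := Finset.mem_image.mp hx
      simpa using a.2
    · intro x hx y hy hxy hadj
      simp only [Finset.coe_image, Set.mem_image, Finset.mem_coe] at hx hy
      obtain ⟨a, ha, rfl⟩ := hx
      obtain ⟨b, hb, rfl⟩ := hy
      refine hind ha hb (fun h => hxy (congrArg Subtype.val h)) ?_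
      rw [induce_adj']
      exact hadj

lemma aOn_univ [Fintype V] [DecidableEq V] (G : SimpleGraph V) :
    aOn G Finset.univ = _root_.indepNum G := by
  apply le_antisymm
  · apply csSup_le (aOn_set_nonempty G Finset.univ)
    rintro n ⟨t, _, hind, rfl⟩
    exact le_csSup ⟨Fintype.card V, by rintro n ⟨u, _, rfl⟩; exact Finset.card_le_univ u⟩ ⟨t, hind, rfl⟩
  · unfold _root_.indepNum
    refine csSup_le ?_ ?_
    · exact ⟨0, ∅, by simp [SimpleGraph.IsIndepFinset], by simp⟩
    rintro n ⟨t, hind, rfl⟩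
    exact le_aOn G (Finset.subset_univ t) hind

/-- T1: `bOn` equals `cliqueCoverNum` of the induced subgraph. -/
lemma bOn_eq_cliqueCoverNum [DecidableEq V] (G : SimpleGraph V) (s : Finset V) :
    bOn G s = cliqueCoverNum (G.induce (s : Set V)) := by
  classical
  apply le_antisymm
  · -- from an induce-cover build a bOn-cover
    have hne : {n | ∃ C : Finset (Finset ↥(s : Set V)), (G.induce (s : Set V)).IsCliqueCover C ∧ C.card = n}.Nonempty := by
      refine ⟨_, (Finset.univ.image fun v : ↥(s : Set V) => ({v} : Finset ↥(s : Set V))), ⟨?_, ?_⟩, rfl⟩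
      · rintro c hc
        obtain ⟨v, _, rfl⟩ := Finset.mem_image.mp hc
        simp [SimpleGraph.isClique_singleton]
      · intro v
        exact ⟨{v}, Finset.mem_image_of_mem _ (Finset.mem_univ v), by simp⟩
    obtain ⟨C, ⟨hcl, hcov⟩, hcard⟩ := Nat.sInf_mem hne
    have := bOn_le G (s := s) (C := C.image (fun c => c.image Subtype.val)) ?_ ?_
    · calc bOn G s ≤ (C.image (fun c => c.image Subtype.val)).card := this
        _ ≤ C.card := Finset.card_image_le
        _ = _ := hcard
    · rintro c hc
      obtain ⟨d, hd, rfl⟩ := Finset.mem_image.mp hc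
      constructor
      · intro x hx
        obtain ⟨a, _, rfl⟩ := Finset.mem_image.mp hx
        simpa using a.2
      · intro x hx y hy hxy
        simp only [Finset.coe_image, Set.mem_image, Finset.mem_coe] at hx hy
        obtain ⟨a, ha, rfl⟩ := hx
        obtain ⟨b, hb, rfl⟩ := hy
        have := hcl d hd ha hb (fun h => hxy (congrArg Subtype.val h))
        rw [induce_adj'] at this
        exact this
    · intro v hv
      obtain ⟨c, hc, hvc⟩ := hcov ⟨v, by simpa using hv⟩
      exact ⟨c.image Subtype.val, Finset.mem_image_of_mem _ hc,
        Finset.mem_image_of_mem _ hvc⟩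
  · -- from a bOn-cover build an induce-cover
    obtain ⟨C, hcl, hcov, hcard⟩ := exists_bOn_witness G s
    have hmem : cliqueCoverNum (G.induce (s : Set V)) ≤
        (C.image (fun c => c.subtype (fun v => v ∈ (s : Set V)))).card := by
      apply Nat.sInf_le
      refine ⟨C.image (fun c => c.subtype (fun v => v ∈ (s : Set V))), ⟨?_, ?_⟩, rfl⟩
      · rintro c hc
        obtain ⟨d, hd, rfl⟩ := Finset.mem_image.mp hc
        intro a ha b hb hab
        rw [Finset.mem_coe, Finset.mem_subtype] at ha hb
        rw [induce_adj']
        have hne' : (a : V) ≠ (b : V) := fun h => hab (Subtype.ext h)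
        exact (hcl d hd).2 ha hb hne'
      · rintro ⟨v, hv⟩
        obtain ⟨c, hc, hvc⟩ := hcov v (by simpa using hv)
        exact ⟨c.subtype _, Finset.mem_image_of_mem _ hc, by simpa using hvc⟩
    exact hmem.trans (le_of_le_of_eq Finset.card_image_le hcard)

lemma bOn_univ [Fintype V] [DecidableEq V] (G : SimpleGraph V) :
    bOn G Finset.univ = cliqueCoverNum G := by
  apply le_antisymm
  · obtain ⟨n, ⟨C, ⟨hcl, hcov⟩, hcard⟩⟩ : ∃ n, ∃ C : Finset (Finset V), G.IsCliqueCover C ∧ C.card = n := by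
      refine ⟨_, Finset.univ.image fun v => ({v} : Finset V), ⟨?_, ?_⟩, rfl⟩
      · rintro c hc
        obtain ⟨v, _, rfl⟩ := Finset.mem_image.mp hc
        simp [SimpleGraph.isClique_singleton]
      · intro v
        exact ⟨{v}, Finset.mem_image_of_mem _ (Finset.mem_univ v), by simp⟩
    obtain ⟨C, ⟨hcl, hcov⟩, hcard⟩ := Nat.sInf_mem (⟨n, C, ⟨hcl, hcov⟩, hcard⟩ :
      {n | ∃ C : Finset (Finset V), G.IsCliqueCover C ∧ C.card = n}.Nonempty)
    have := bOn_le G (s := Finset.univ) (C := C.image (fun c => c ∩ Finset.univ)) ?_ ?_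
    · calc bOn G Finset.univ ≤ _ := this
        _ ≤ C.card := Finset.card_image_le
        _ = _ := hcard
    · rintro c hc
      obtain ⟨d, hd, rfl⟩ := Finset.mem_image.mp hc
      refine ⟨Finset.subset_univ _, ?_⟩
      have : ((d ∩ Finset.univ : Finset V) : Set V) ⊆ (d : Set V) := by
        intro x hx; simp only [Finset.coe_inter, Set.mem_inter_iff] at hx; exact hx.1
      exact (hcl d hd).subset this
    · intro v _
      obtain ⟨c, hc, hvc⟩ := hcov v
      exact ⟨c ∩ Finset.univ, Finset.mem_image_of_mem _ hc, by simpa using hvc⟩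
  · obtain ⟨C, hcl, hcov, hcard⟩ := exists_bOn_witness G Finset.univ
    apply Nat.sInf_le
    exact ⟨C, ⟨fun c hc => (hcl c hc).2, fun v => hcov v (Finset.mem_univ v)⟩, hcard⟩




set_option maxHeartbeats 1000000 in
lemma lemA [DecidableEq V] (G H : SimpleGraph V) (a b : V → ℝ)
    (hiff : ∀ u v, H.Adj u v ↔ u ≠ v ∧ (Set.Icc (a u) (b u) ∩ Set.Icc (a v) (b v)).Nonempty)
    (hGH : G ≤ H) (c : ℝ) (hc : 1 ≤ c) :
    ∀ h : ℕ, ∀ s : Finset V, aOn H s ≤ h →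
      (∀ W ⊆ s, H.IsClique (W : Set V) → (bOn G W : ℝ) ≤ c * aOn G W) →
      (bOn G s : ℝ) ≤ c * aOn G s * (2 * Real.logb 2 h + 2) := by
  intro h
  induction h using Nat.strong_induction_on with
  | _ h IH =>
  intro s hsh hcl
  classical
  rcases Nat.eq_zero_or_pos h with rfl | hpos
  · have hs0 : aOn H s = 0 := Nat.le_zero.mp hsh
    have : s = ∅ := eq_empty_of_aOn_eq_zero H hs0
    subst this
    simp [bOn_empty, aOn_empty]
  have h1R : (1 : ℝ) ≤ h := by exact_mod_cast hpos
  have hLh : 0 ≤ Real.logb 2 h := Real.logb_nonneg one_lt_two h1R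
  -- split off empty-interval vertices
  set sE : Finset V := s.filter (fun v => ¬ a v ≤ b v) with hsE
  set s₀ : Finset V := s.filter (fun v => a v ≤ b v) with hs₀
  have hsE_sub : sE ⊆ s := Finset.filter_subset _ _
  have hs₀_sub : s₀ ⊆ s := Finset.filter_subset _ _
  have hunion : s₀ ∪ sE = s := Finset.filter_union_filter_not_eq _ s
  have hdisj : Disjoint s₀ sE := by
    rw [Finset.disjoint_left]
    intro v hv hv'
    exact (Finset.mem_filter.mp hv').2 (Finset.mem_filter.mp hv).2
  -- empty-interval vertices are isolated
  have hEiso : ∀ v ∈ sE, ∀ u, ¬ H.Adj v u := by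
    intro v hv u hadj
    obtain ⟨x, hx, _⟩ := ((hiff v u).mp hadj).2
    rw [Set.Icc_eq_empty (Finset.mem_filter.mp hv).2] at hx
    exact hx
  have hEisoG : ∀ v ∈ sE, ∀ u, ¬ G.Adj v u := fun v hv u hadj => hEiso v hv u (hGH hadj)
  have hsE_indep : G.IsIndepFinset sE := fun x hx y _ _ hadj => hEisoG x hx y hadj
  have hsE_card : (sE.card : ℕ) ≤ aOn G sE := by
    have := le_aOn G (Finset.Subset.refl sE) hsE_indep
    simpa using this
  have hAsplit : aOn G s₀ + sE.card ≤ aOn G s := by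
    have h1 : aOn G s₀ + aOn G sE ≤ aOn G (s₀ ∪ sE) :=
      aOn_add_le G hdisj (fun u hu w hw hadj => hEisoG w hw u hadj.symm)
    rw [hunion] at h1
    omega
  by_cases hs₀e : s₀ = ∅
  · -- all vertices isolated
    have hseq : s = sE := by rw [← hunion, hs₀e]; simp
    have h2 : (bOn G s : ℝ) ≤ (aOn G s : ℝ) := by
      have : bOn G s ≤ aOn G s := by
        calc bOn G s ≤ s.card := bOn_le_card G s
          _ ≤ aOn G s := by rw [hseq] at *; omega
      exact_mod_cast this
    have hA : (0:ℝ) ≤ (aOn G s : ℝ) := Nat.cast_nonneg _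
    nlinarith [mul_nonneg hA hLh, mul_nonneg (sub_nonneg.mpr hc) hA,
      mul_nonneg (mul_nonneg (sub_nonneg.mpr hc) hA) hLh]
  -- main case
  obtain ⟨v₀, hv₀⟩ := Finset.nonempty_iff_ne_empty.mpr hs₀e
  set h₀ : ℕ := aOn H s₀ with hh₀
  have hh₀pos : 1 ≤ h₀ := one_le_aOn H hv₀
  have hh₀le : h₀ ≤ h := le_trans (aOn_mono H hs₀_sub) hsh
  set m : ℕ := h₀ / 2 with hm
  -- choose the splitting point
  set D : ℝ → Finset V := fun x => s₀.filter (fun v => b v ≤ x) with hD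
  set B : Finset ℝ := s₀.image b with hB
  have hBne : B.Nonempty := ⟨b v₀, Finset.mem_image_of_mem b hv₀⟩
  set T : Finset ℝ := B.filter (fun x => m + 1 ≤ aOn H (D x)) with hT
  have hmaxT : B.max' hBne ∈ T := by
    rw [hT, Finset.mem_filter]
    refine ⟨Finset.max'_mem B hBne, ?_⟩
    have hDmax : D (B.max' hBne) = s₀ := by
      apply Finset.filter_true_of_mem
      intro v hv
      exact Finset.le_max' B (b v) (Finset.mem_image_of_mem b hv)
    rw [hDmax, ← hh₀]
    have : m < h₀ := Nat.div_lt_self hh₀pos one_lt_two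
    omega
  have hTne : T.Nonempty := ⟨_, hmaxT⟩
  set c0 : ℝ := T.min' hTne with hc0def
  have hc0T : c0 ∈ T := Finset.min'_mem T hTne
  have hc0D : m + 1 ≤ aOn H (D c0) := (Finset.mem_filter.mp hc0T).2
  set L : Finset V := s₀.filter (fun v => b v < c0) with hL
  set R : Finset V := s₀.filter (fun v => c0 < a v) with hRdef
  set M : Finset V := s₀.filter (fun v => a v ≤ c0 ∧ c0 ≤ b v) with hM
  have hLsub : L ⊆ s := (Finset.filter_subset _ _).trans hs₀_sub
  have hRsub : R ⊆ s := (Finset.filter_subset _ _).trans hs₀_sub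
  have hMsub : M ⊆ s := (Finset.filter_subset _ _).trans hs₀_sub
  -- (i) left part has small H-independence
  have hLa : aOn H L ≤ m := by
    rcases L.eq_empty_or_nonempty with hLe | hLne
    · rw [hLe, aOn_empty]; omega
    · obtain ⟨vx, hvx, hvxb⟩ := Finset.mem_image.mp ((L.image b).max'_mem (hLne.image b))
      set x' : ℝ := (L.image b).max' (hLne.image b) with hx'
      have hx'B : x' ∈ B := by
        rw [hB, ← hvxb]
        exact Finset.mem_image_of_mem b ((Finset.filter_subset _ _) hvx)
      have hx'lt : x' < c0 := by
        rw [← hvxb]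
        exact (Finset.mem_filter.mp hvx).2
      have hx'notT : x' ∉ T := by
        intro hmem
        exact absurd (Finset.min'_le T x' hmem) (not_le.mpr hx'lt)
      have hnot : ¬ (m + 1 ≤ aOn H (D x')) := by
        intro hcon
        exact hx'notT (Finset.mem_filter.mpr ⟨hx'B, hcon⟩)
      have hLD : L ⊆ D x' := by
        intro v hv
        rw [hD, Finset.mem_filter]
        exact ⟨(Finset.filter_subset _ _) hv, Finset.le_max' _ (b v) (Finset.mem_image_of_mem b hv)⟩
      have := aOn_mono H hLD
      omega
  -- (ii) right part has small H-independence
  have hRa : aOn H R + (m + 1) ≤ h₀ := by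
    have hdisj2 : Disjoint (D c0) R := by
      rw [Finset.disjoint_left]
      intro v hv hv'
      have h1 := (Finset.mem_filter.mp hv).2
      have h2 := (Finset.mem_filter.mp hv').2
      have h3 := (Finset.mem_filter.mp ((Finset.filter_subset _ _) hv : v ∈ s₀)).2
      linarith
    have hcross : ∀ u ∈ D c0, ∀ w ∈ R, ¬ H.Adj u w := by
      intro u hu w hw hadj
      obtain ⟨x, hx1, hx2⟩ := ((hiff u w).mp hadj).2
      have hbu : b u ≤ c0 := (Finset.mem_filter.mp hu).2
      have haw : c0 < a w := (Finset.mem_filter.mp hw).2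
      have := hx1.2
      have := hx2.1
      linarith
    have h4 : aOn H (D c0) + aOn H R ≤ aOn H (D c0 ∪ R) := aOn_add_le H hdisj2 hcross
    have h5 : aOn H (D c0 ∪ R) ≤ h₀ := by
      rw [hh₀]
      apply aOn_mono H
      apply Finset.union_subset (Finset.filter_subset _ _) (Finset.filter_subset _ _)
    omega
  -- (iii) middle part is an H-clique
  have hMcl : H.IsClique (M : Set V) := by
    intro u hu v hv huv
    rw [Finset.mem_coe, hM, Finset.mem_filter] at hu hv
    exact (hiff u v).mpr ⟨huv, ⟨c0, ⟨hu.2.1, hu.2.2⟩, ⟨hv.2.1, hv.2.2⟩⟩⟩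
  -- (iv) the four parts cover s
  have hcover : s ⊆ sE ∪ (L ∪ (M ∪ R)) := by
    intro v hv
    simp only [Finset.mem_union, hsE, hs₀, hL, hRdef, hM, Finset.mem_filter]
    by_cases hab : a v ≤ b v
    · by_cases h5 : b v < c0
      · exact Or.inr (Or.inl ⟨⟨hv, hab⟩, h5⟩)
      · by_cases h6 : c0 < a v
        · exact Or.inr (Or.inr (Or.inr ⟨⟨hv, hab⟩, h6⟩))
        · exact Or.inr (Or.inr (Or.inl ⟨⟨hv, hab⟩, not_lt.mp h6, not_lt.mp h5⟩))
    · exact Or.inl ⟨hv, hab⟩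
  -- (v) cover subadditivity
  have hbOn4 : bOn G s ≤ bOn G sE + (bOn G L + (bOn G M + bOn G R)) := by
    have s1 : bOn G s ≤ bOn G sE + bOn G (L ∪ (M ∪ R)) :=
      bOn_union_le G hsE_sub (by
        apply Finset.union_subset hLsub (Finset.union_subset hMsub hRsub)) hcover
    have s2 : bOn G (L ∪ (M ∪ R)) ≤ bOn G L + bOn G (M ∪ R) :=
      bOn_union_le G Finset.subset_union_left Finset.subset_union_right (Finset.Subset.refl _)
    have s3 : bOn G (M ∪ R) ≤ bOn G M + bOn G R :=
      bOn_union_le G Finset.subset_union_left Finset.subset_union_right (Finset.Subset.refl _)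
    omega
  -- (vi) recursive bounds on L and R
  have hmlth : m < h := lt_of_lt_of_le (Nat.div_lt_self hh₀pos one_lt_two) hh₀le
  have key : ∀ s' : Finset V, s' ⊆ s → aOn H s' ≤ m →
      (bOn G s' : ℝ) ≤ c * aOn G s' * (2 * Real.logb 2 h) := by
    intro s' hsub hs'm
    rcases s'.eq_empty_or_nonempty with rfl | ⟨w, hw⟩
    · simp [bOn_empty, aOn_empty]
    · have hm1 : 1 ≤ m := le_trans (one_le_aOn H hw) hs'm
      have hIH := IH m hmlth s' hs'm (fun W hW hWcl => hcl W (hW.trans hsub) hWcl)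
      have hmhalf : (m : ℝ) ≤ (h : ℝ) / 2 := by
        have : 2 * m ≤ h := by
          have := Nat.div_mul_le_self h₀ 2
          omega
        have := (Nat.cast_le (α := ℝ)).mpr this
        push_cast at this
        linarith
      have hlogm : Real.logb 2 m ≤ Real.logb 2 h - 1 := by
        have hmpos : (0 : ℝ) < m := by exact_mod_cast hm1
        have h7 : Real.logb 2 (m : ℝ) ≤ Real.logb 2 ((h : ℝ) / 2) :=
          Real.logb_le_logb_of_le one_lt_two hmpos hmhalf
        rwa [Real.logb_div (by positivity) (by norm_num), Real.logb_self_eq_one (by norm_num)] at h7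
      have hcA : 0 ≤ c * (aOn G s' : ℝ) := by positivity
      calc (bOn G s' : ℝ) ≤ c * aOn G s' * (2 * Real.logb 2 m + 2) := hIH
        _ ≤ c * aOn G s' * (2 * Real.logb 2 h) := by nlinarith
  have hRm : aOn H R ≤ m := by
    have := Nat.div_add_mod h₀ 2
    have : h₀ ≤ 2 * m + 1 := by omega
    omega
  have hLbd := key L hLsub hLa
  have hRbd := key R hRsub hRm
  -- (vii) middle bound from hypothesis
  have hMbd : (bOn G M : ℝ) ≤ c * aOn G M := hcl M hMsub hMcl
  -- (viii) independence-number accounting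
  have hLRdisj : Disjoint L R := by
    rw [Finset.disjoint_left]
    intro v hv hv'
    have h5 := (Finset.mem_filter.mp hv).2
    have h6 := (Finset.mem_filter.mp hv').2
    have h7 := (Finset.mem_filter.mp ((Finset.filter_subset _ _) hv : v ∈ s₀)).2
    linarith
  have hLRcross : ∀ u ∈ L, ∀ w ∈ R, ¬ G.Adj u w := by
    intro u hu w hw hadj
    obtain ⟨x, hx1, hx2⟩ := ((hiff u w).mp (hGH hadj)).2
    have h5 := (Finset.mem_filter.mp hu).2
    have h6 := (Finset.mem_filter.mp hw).2
    have := hx1.2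
    have := hx2.1
    linarith
  have hALR : aOn G L + aOn G R ≤ aOn G s₀ := by
    have h5 : aOn G L + aOn G R ≤ aOn G (L ∪ R) := aOn_add_le G hLRdisj hLRcross
    have h6 : aOn G (L ∪ R) ≤ aOn G s₀ := aOn_mono G (Finset.union_subset
      (Finset.filter_subset _ _) (Finset.filter_subset _ _))
    omega
  have hAM : aOn G M ≤ aOn G s₀ := aOn_mono G (Finset.filter_subset _ _)
  -- (ix) final real arithmetic
  have e := (sE.card : ℝ)
  have hbig : (bOn G s : ℝ) ≤ (sE.card : ℝ) + (c * aOn G L * (2 * Real.logb 2 h)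
      + (c * aOn G M + c * aOn G R * (2 * Real.logb 2 h))) := by
    have h5 : (bOn G s : ℝ) ≤ (bOn G sE : ℝ) + ((bOn G L : ℝ) + ((bOn G M : ℝ) + (bOn G R : ℝ))) := by
      exact_mod_cast hbOn4
    have h6 : (bOn G sE : ℝ) ≤ (sE.card : ℝ) := by exact_mod_cast bOn_le_card G sE
    linarith
  have hALR' : (aOn G L : ℝ) + (aOn G R : ℝ) ≤ (aOn G s₀ : ℝ) := by exact_mod_cast hALR
  have hAM' : (aOn G M : ℝ) ≤ (aOn G s₀ : ℝ) := by exact_mod_cast hAM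
  have hAsplit' : (aOn G s₀ : ℝ) + (sE.card : ℝ) ≤ (aOn G s : ℝ) := by exact_mod_cast hAsplit
  have hA₀ : (0 : ℝ) ≤ (aOn G s₀ : ℝ) := Nat.cast_nonneg _
  have hAL : (0 : ℝ) ≤ (aOn G L : ℝ) := Nat.cast_nonneg _
  have hAR : (0 : ℝ) ≤ (aOn G R : ℝ) := Nat.cast_nonneg _
  have hE : (0 : ℝ) ≤ (sE.card : ℝ) := Nat.cast_nonneg _
  obtain ⟨Lh, hLhdef⟩ : ∃ x, Real.logb 2 (h:ℝ) = x := ⟨_, rfl⟩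
  rw [hLhdef] at hbig hLh ⊢
  nlinarith [mul_nonneg (mul_nonneg (by linarith : (0:ℝ) ≤ c) hLh) hE,
    mul_nonneg (by linarith : (0:ℝ) ≤ c) hE,
    mul_le_mul_of_nonneg_left hALR' (by nlinarith : (0:ℝ) ≤ c * (2 * Lh)),
    mul_le_mul_of_nonneg_left hAM' (by linarith : (0:ℝ) ≤ c),
    mul_le_mul_of_nonneg_left hAsplit' (by nlinarith : (0:ℝ) ≤ c * (2 * Lh + 2))]




lemma prod_factors_one_le {n : ℕ} (H : Fin n → SimpleGraph V) [Fintype V]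
    (hα : ∀ i, 1 ≤ _root_.indepNum (H i)) :
    (1 : ℝ) ≤ ∏ i : Fin n, (Real.logb 2 (_root_.indepNum (H i) : ℝ) + 1) := by
  have h1 : ∏ i : Fin n, (1:ℝ) ≤ ∏ i : Fin n, (Real.logb 2 (_root_.indepNum (H i) : ℝ) + 1) := by
    apply Finset.prod_le_prod (fun i _ => zero_le_one)
    intro i _
    have : (0:ℝ) ≤ Real.logb 2 (_root_.indepNum (H i) : ℝ) :=
      Real.logb_nonneg one_lt_two (by exact_mod_cast hα i)
    linarith
  simpa using h1

set_option maxHeartbeats 1000000 in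
lemma lemB [Fintype V] [DecidableEq V] :
    ∀ (n : ℕ) (H : Fin n → SimpleGraph V) (G : SimpleGraph V),
      (∀ i, IsIntervalGraph (H i)) → (∀ i, G ≤ H i) → (∀ i, 1 ≤ _root_.indepNum (H i)) →
      ∀ (c : ℝ), 1 ≤ c → ∀ s : Finset V,
      (∀ W ⊆ s, (∀ i, (H i).IsClique (W : Set V)) → (bOn G W : ℝ) ≤ c * aOn G W) →
      (bOn G s : ℝ) ≤ c * 2 ^ n * aOn G s * ∏ i, (Real.logb 2 (_root_.indepNum (H i) : ℝ) + 1) := by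
  intro n
  induction n with
  | zero =>
    intro H G _ _ _ c hc s hbase
    have := hbase s (Finset.Subset.refl s) (fun i => Fin.elim0 i)
    simpa using this
  | succ n IHn =>
    intro H G hint hle hα c hc s hbase
    obtain ⟨a, b, hiff⟩ := hint 0
    set c' : ℝ := c * 2 ^ n * ∏ i : Fin n, (Real.logb 2 (_root_.indepNum (H i.succ) : ℝ) + 1) with hc'
    have hprodtail : (1:ℝ) ≤ ∏ i : Fin n, (Real.logb 2 (_root_.indepNum (H i.succ) : ℝ) + 1) :=
      prod_factors_one_le (fun i => H i.succ) (fun i => hα i.succ)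
    have hc'1 : 1 ≤ c' := by
      rw [hc']
      have h2n : (1:ℝ) ≤ 2 ^ n := one_le_pow₀ (by norm_num)
      have h3 : (1:ℝ) * 1 ≤ c * 2 ^ n := mul_le_mul hc h2n zero_le_one (le_trans zero_le_one hc)
      have h4 : (1:ℝ) * 1 * 1 ≤ c * 2 ^ n * ∏ i : Fin n, (Real.logb 2 (_root_.indepNum (H i.succ) : ℝ) + 1) :=
        mul_le_mul h3 hprodtail zero_le_one (by linarith)
      linarith
    have hmid : ∀ W ⊆ s, (H 0).IsClique (W : Set V) → (bOn G W : ℝ) ≤ c' * aOn G W := by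
      intro W hWs hWcl
      have := IHn (fun i => H i.succ) G (fun i => hint i.succ) (fun i => hle i.succ)
        (fun i => hα i.succ) c hc W ?_
      · rw [hc']
        calc (bOn G W : ℝ) ≤ c * 2 ^ n * aOn G W * ∏ i : Fin n, (Real.logb 2 (_root_.indepNum (H i.succ) : ℝ) + 1) := this
          _ = c * 2 ^ n * (∏ i : Fin n, (Real.logb 2 (_root_.indepNum (H i.succ) : ℝ) + 1)) * aOn G W := by ring
      · intro W' hW' hW'cl
        apply hbase W' (hW'.trans hWs)
        intro i
        rcases Fin.eq_zero_or_eq_succ i with rfl | ⟨j, rfl⟩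
        · exact hWcl.subset (by exact_mod_cast hW')
        · exact hW'cl j
    have hstep := lemA G (H 0) a b hiff (hle 0) c' hc'1 (aOn (H 0) s) s le_rfl hmid
    rcases s.eq_empty_or_nonempty with rfl | ⟨w, hw⟩
    · rw [bOn_empty, aOn_empty]
      push_cast
      have h2n : (0:ℝ) ≤ c * 2 ^ (n+1) := by positivity
      have := prod_factors_one_le H hα
      nlinarith
    · have hone : 1 ≤ aOn (H 0) s := one_le_aOn (H 0) hw
      have hmono : aOn (H 0) s ≤ _root_.indepNum (H 0) := by
        rw [← aOn_univ (H 0)]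
        exact aOn_mono (H 0) (Finset.subset_univ s)
      have hlog : Real.logb 2 (aOn (H 0) s : ℝ) ≤ Real.logb 2 (_root_.indepNum (H 0) : ℝ) :=
        Real.logb_le_logb_of_le one_lt_two (by exact_mod_cast hone) (by exact_mod_cast hmono)
      have hA : (0:ℝ) ≤ (aOn G s : ℝ) := Nat.cast_nonneg _
      have hc'A : (0:ℝ) ≤ c' * aOn G s := mul_nonneg (le_trans zero_le_one hc'1) hA
      have h2 : (bOn G s : ℝ) ≤ c' * aOn G s * (2 * Real.logb 2 (_root_.indepNum (H 0) : ℝ) + 2) := by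
        calc (bOn G s : ℝ) ≤ c' * aOn G s * (2 * Real.logb 2 (aOn (H 0) s : ℝ) + 2) := hstep
          _ ≤ _ := by nlinarith
      calc (bOn G s : ℝ) ≤ c' * aOn G s * (2 * Real.logb 2 (_root_.indepNum (H 0) : ℝ) + 2) := h2
        _ = c * 2 ^ (n+1) * aOn G s * ∏ i : Fin (n+1), (Real.logb 2 (_root_.indepNum (H i) : ℝ) + 1) := by
          rw [hc', Fin.prod_univ_succ]
          ring


end CCAux

open CCAux in
theorem clique_cover_bound_many_interval_perfect {V : Type*} [Fintype V]
    (t : ℕ) (ht : 2 ≤ t) (H : Fin (t - 1) → SimpleGraph V) (K G : SimpleGraph V)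
    (hG : G = (⨅ i, H i) ⊓ K)
    (hH : ∀ i, IsIntervalGraph (H i)) (hK : IsPerfectGraph K) :
    (cliqueCoverNum G : ℝ) ≤
      2 ^ (t - 1) * (_root_.indepNum G : ℝ) *
        ∏ i : Fin (t - 1), (Real.logb 2 (_root_.indepNum (H i) : ℝ) + 1) := by
  classical
  rcases isEmpty_or_nonempty V with hV | hV
  · have hcc : cliqueCoverNum G = 0 := by
      have : cliqueCoverNum G ≤ (∅ : Finset (Finset V)).card :=
        Nat.sInf_le ⟨∅, ⟨by simp, fun v => (hV.false v).elim⟩, rfl⟩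
      simpa using this
    have hin : _root_.indepNum G = 0 := by
      apply le_antisymm _ (Nat.zero_le _)
      unfold _root_.indepNum
      refine csSup_le ?_ ?_
      · exact ⟨0, ∅, by simp [SimpleGraph.IsIndepFinset], by simp⟩
      · rintro n ⟨s, _, rfl⟩
        simp [Finset.eq_empty_of_isEmpty s]
    rw [hcc, hin]
    simp
  · have hα : ∀ i, 1 ≤ _root_.indepNum (H i) := by
      intro i
      obtain ⟨v⟩ := hV
      have : ({v} : Finset V).card ≤ _root_.indepNum (H i) := by
        apply le_csSup ⟨Fintype.card V, ?_⟩
        · exact ⟨{v}, by simp [SimpleGraph.IsIndepFinset], rfl⟩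
        · rintro n ⟨s, _, rfl⟩
          exact Finset.card_le_univ s
      simpa using this
    have hle : ∀ i, G ≤ H i := fun i => hG ▸ le_trans inf_le_left (iInf_le H i)
    have hleK : G ≤ K := hG ▸ inf_le_right
    have hbase : ∀ W ⊆ (Finset.univ : Finset V),
        (∀ i, (H i).IsClique (W : Set V)) → (bOn G W : ℝ) ≤ 1 * aOn G W := by
      intro W _ hWcl
      rw [one_mul]
      have h1 : bOn G W ≤ bOn K W := by
        obtain ⟨C, hcl, hcov, hcard⟩ := exists_bOn_witness K W
        rw [← hcard]
        apply bOn_le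
        · intro cc hcc
          refine ⟨(hcl cc hcc).1, ?_⟩
          intro u hu v hv huv
          have hKadj : K.Adj u v := (hcl cc hcc).2 hu hv huv
          have hWsub : (cc : Set V) ⊆ (W : Set V) := Finset.coe_subset.mpr (hcl cc hcc).1
          have hHadj : ∀ i, (H i).Adj u v := fun i => hWcl i (hWsub hu) (hWsub hv) huv
          rw [hG, SimpleGraph.inf_adj, SimpleGraph.iInf_adj]
          exact ⟨⟨hHadj, huv⟩, hKadj⟩
        · exact hcov
      have h2 : bOn K W = aOn K W := by
        rw [bOn_eq_cliqueCoverNum, aOn_eq_indepNum, hK W]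
      have h3 : aOn K W ≤ aOn G W := aOn_anti hleK W
      exact_mod_cast le_trans h1 (le_trans (le_of_eq h2) h3)
    have hmain := lemB (t - 1) H G hH hle hα 1 le_rfl Finset.univ hbase
    rw [bOn_univ, aOn_univ] at hmain
    calc (cliqueCoverNum G : ℝ)
        ≤ 1 * 2 ^ (t - 1) * _root_.indepNum G * ∏ i : Fin (t - 1), (Real.logb 2 (_root_.indepNum (H i) : ℝ) + 1) := hmain
      _ = _ := by ring
end
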